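/- arXiv:2105.00541 — 6 statements merged into one kernel-verified Lean document; each statement's English description precedes it below -/
import Mathlib

section
/- Let V_1, …, V_k be subsets of {1,…,n} and M_V the associated variable-valued matrix over K. For every subset S ⊆ {1,…,n}, the columns of M_V indexed by S are linearly independent over K if and only if every nonempty subset U ⊆ S satisfies |{i ∈ {1,…,k} : V_i ∩ U ≠ ∅}| ≥ |U|. -/
open MvPolynomial

/-- The polynomial ring `ℝ[x_{i,j}]` in `k·n` independent variables. -/
abbrev PR (k n : ℕ) : Type := MvPolynomial (Fin k × Fin n) ℝ

/-- Its field of fractions `K`. -/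
abbrev FF (k n : ℕ) : Type := FractionRing (PR k n)

/-- The variable-valued matrix `M_V` over `K` attached to a collection
`V = (V_1, …, V_k)` of subsets of `{1,…,n}`: the `(i,j)` entry is `x_{i,j}` if
`j ∈ V_i` and `0` otherwise. -/
noncomputable def MV (k n : ℕ) (V : Fin k → Finset (Fin n)) :
    Matrix (Fin k) (Fin n) (FF k n) :=
  Matrix.of fun i j =>
    if j ∈ V i then algebraMap (PR k n) (FF k n) (X (i, j)) else 0

/-- Linear independence over `F` of the columns of a matrix indexed by a set `S`. -/
def ColsIndep {k n : ℕ} {F : Type*} [Field F] (M : Matrix (Fin k) (Fin n) F)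
    (S : Finset (Fin n)) : Prop :=
  LinearIndependent F (fun j : {x : Fin n // x ∈ S} => fun i : Fin k => M i (j : Fin n))

lemma prod_monomial_one {σ : Type*} {ι : Type*} (s : Finset ι) (f : ι → (σ →₀ ℕ)) :
    (∏ i ∈ s, (monomial (f i) (1 : ℝ))) = monomial (∑ i ∈ s, f i) 1 := by
  classical
  induction s using Finset.cons_induction with
  | empty => simp
  | cons a s ha ih => rw [Finset.prod_cons, Finset.sum_cons, ih, monomial_mul, mul_one]

lemma det_B_ne_zero {k n : ℕ} {ι : Type*} [Fintype ι] [DecidableEq ι]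
    (V : Fin k → Finset (Fin n)) (m : ι → Fin k) (c : ι → Fin n)
    (hm : Function.Injective m) (hc : Function.Injective c)
    (hmc : ∀ j, c j ∈ V (m j)) :
    (Matrix.of fun i j : ι =>
      if c j ∈ V (m i) then (X (m i, c j) : PR k n) else 0).det ≠ 0 := by
  classical
  set B : Matrix ι ι (PR k n) := Matrix.of fun i j : ι =>
      if c j ∈ V (m i) then (X (m i, c j) : PR k n) else 0 with hB
  set w : Equiv.Perm ι → ((Fin k × Fin n) →₀ ℕ) :=
      fun σ => ∑ i, Finsupp.single (m (σ i), c i) 1 with hwdef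
  -- evaluating `w σ` at `(m j, c j)`
  have hweval : ∀ (σ : Equiv.Perm ι) (j : ι),
      (w σ) (m j, c j) = if m (σ j) = m j then 1 else 0 := by
    intro σ j
    rw [hwdef]
    rw [Finsupp.finset_sum_apply]
    rw [Finset.sum_eq_single j]
    · rw [Finsupp.single_apply]
      by_cases h : m (σ j) = m j
      · rw [if_pos h, if_pos (by rw [h])]
      · rw [if_neg h, if_neg (by intro hh; exact h (congrArg Prod.fst hh))]
    · intro b _ hbj
      rw [Finsupp.single_apply, if_neg]
      intro hh
      exact hbj (hc (congrArg Prod.snd hh))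
    · intro hj; exact absurd (Finset.mem_univ j) hj
  have key : ∀ σ : Equiv.Perm ι,
      MvPolynomial.coeff (w 1) (∏ i, B (σ i) i) = if σ = 1 then 1 else 0 := by
    intro σ
    by_cases hall : ∀ i, c i ∈ V (m (σ i))
    · have hprod : (∏ i, B (σ i) i) = monomial (w σ) 1 := by
        rw [hwdef]
        rw [← prod_monomial_one]
        refine Finset.prod_congr rfl fun i _ => ?_
        rw [hB]
        simp only [Matrix.of_apply, if_pos (hall i)]
        rfl
      rw [hprod, coeff_monomial]
      by_cases hσ : σ = 1
      · subst hσ; simp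
      · rw [if_neg hσ, if_neg]
        intro hw
        apply hσ
        refine Equiv.ext fun j => ?_
        have hev := congrArg (fun (g : (Fin k × Fin n) →₀ ℕ) => g (m j, c j)) hw
        simp only [hweval] at hev
        have h1 : (if m ((1 : Equiv.Perm ι) j) = m j then (1:ℕ) else 0) = 1 := by simp
        rw [h1] at hev
        have hmm : m (σ j) = m j := by
          by_contra hmm
          rw [if_neg hmm] at hev
          exact zero_ne_one hev
        exact hm hmm
    · push_neg at hall
      obtain ⟨i0, hi0⟩ := hall
      have hz : (∏ i, B (σ i) i) = 0 := by
        refine Finset.prod_eq_zero (Finset.mem_univ i0) ?_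
        rw [hB]; simp only [Matrix.of_apply, if_neg hi0]
      rw [hz, coeff_zero, if_neg]
      intro hσ
      subst hσ
      exact hi0 (hmc i0)
  have hcoeff : MvPolynomial.coeff (w 1) B.det = 1 := by
    rw [Matrix.det_apply, coeff_sum]
    rw [Finset.sum_eq_single (1 : Equiv.Perm ι)]
    · rw [coeff_smul, key, if_pos rfl]; simp
    · intro σ _ hσ
      rw [coeff_smul, key, if_neg hσ, smul_zero]
    · intro h; exact absurd (Finset.mem_univ _) h
  intro h0
  rw [h0, coeff_zero] at hcoeff
  exact zero_ne_one hcoeff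

/-- the columns of `M_V` indexed by `S` are linearly independent over `K`
iff every nonempty `U ⊆ S` satisfies `|{i : V_i ∩ U ≠ ∅}| ≥ |U|`. -/
theorem statement1 (k n : ℕ) (V : Fin k → Finset (Fin n)) (S : Finset (Fin n)) :
    ColsIndep (MV k n V) S ↔
      ∀ U ⊆ S, U.Nonempty →
        U.card ≤ (Finset.univ.filter fun i : Fin k => (V i ∩ U).Nonempty).card := by
  classical
  constructor
  · -- independence → Hall condition
    intro hLI U hUS hUne
    have hLI0 : LinearIndependent (FF k n)
        (fun j : {x : Fin n // x ∈ S} => fun i : Fin k => MV k n V i (j : Fin n)) := hLI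
    set T := Finset.univ.filter fun i : Fin k => (V i ∩ U).Nonempty with hT
    -- inclusion of U into S
    let e : {x : Fin n // x ∈ U} → {x : Fin n // x ∈ S} := fun j => ⟨j, hUS j.2⟩
    have he : Function.Injective e := fun a b hab =>
      Subtype.ext (congrArg (Subtype.val : {x : Fin n // x ∈ S} → Fin n) hab)
    have hLI1 : LinearIndependent (FF k n)
        (fun j : {x : Fin n // x ∈ U} => fun i : Fin k => MV k n V i (j : Fin n)) :=
      hLI0.comp e he
    -- extension-by-zero linear map
    let Ψ : ({i : Fin k // i ∈ T} → FF k n) →ₗ[FF k n] (Fin k → FF k n) :=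
      { toFun := fun g i => if h : i ∈ T then g ⟨i, h⟩ else 0
        map_add' := by
          intro a b; funext i; by_cases h : i ∈ T <;> simp [h]
        map_smul' := by
          intro r a; funext i; by_cases h : i ∈ T <;> simp [h] }
    let r : {x : Fin n // x ∈ U} → ({i : Fin k // i ∈ T} → FF k n) :=
      fun j i => MV k n V (i : Fin k) (j : Fin n)
    have hcomp : (fun j : {x : Fin n // x ∈ U} => fun i : Fin k => MV k n V i (j : Fin n))
        = Ψ ∘ r := by
      funext j
      funext i
      show MV k n V i (j : Fin n) = if h : i ∈ T then MV k n V i (j : Fin n) else 0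
      by_cases h : i ∈ T
      · rw [dif_pos h]
      · rw [dif_neg h]
        have hnot : (j : Fin n) ∉ V i := by
          intro hji
          apply h
          rw [hT, Finset.mem_filter]
          exact ⟨Finset.mem_univ i, ⟨(j : Fin n), Finset.mem_inter.mpr ⟨hji, j.2⟩⟩⟩
        simp [MV, hnot]
    have hr : LinearIndependent (FF k n) r := by
      apply LinearIndependent.of_comp Ψ
      rw [← hcomp]
      exact hLI1
    calc U.card = Fintype.card {x : Fin n // x ∈ U} := (Fintype.card_coe U).symm
      _ ≤ Module.finrank (FF k n) ({i : Fin k // i ∈ T} → FF k n) :=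
          hr.fintype_card_le_finrank
      _ = Fintype.card {i : Fin k // i ∈ T} := Module.finrank_fintype_fun_eq_card _
      _ = T.card := Fintype.card_coe T
  · -- Hall condition → independence
    intro h
    let t : {x : Fin n // x ∈ S} → Finset (Fin k) :=
      fun j => Finset.univ.filter fun i => (j : Fin n) ∈ V i
    have hall : ∀ s : Finset {x : Fin n // x ∈ S}, s.card ≤ (s.biUnion t).card := by
      intro s
      rcases s.eq_empty_or_nonempty with rfl | hs
      · simp
      · have hUsub : s.image Subtype.val ⊆ S := by
          intro x hx
          obtain ⟨j, _, rfl⟩ := Finset.mem_image.mp hx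
          exact j.2
        have hcard : (s.image Subtype.val).card = s.card :=
          Finset.card_image_of_injective s Subtype.val_injective
        have hmain := h (s.image Subtype.val) hUsub (hs.image _)
        rw [hcard] at hmain
        refine hmain.trans (le_of_eq (congrArg Finset.card ?_))
        ext i
        simp only [Finset.mem_filter, Finset.mem_univ, true_and, Finset.mem_biUnion,
          Finset.Nonempty, Finset.mem_inter, Finset.mem_image, t]
        constructor
        · rintro ⟨x, hxV, j, hjs, rfl⟩
          exact ⟨j, hjs, hxV⟩
        · rintro ⟨j, hjs, hjV⟩
          exact ⟨(j : Fin n), hjV, j, hjs, rfl⟩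
    obtain ⟨f, hfinj, hf⟩ := (Finset.all_card_le_biUnion_card_iff_exists_injective t).mp hall
    have hf' : ∀ j : {x : Fin n // x ∈ S}, (j : Fin n) ∈ V (f j) := by
      intro j
      have := hf j
      simpa [t] using this
    have hdet := det_B_ne_zero V f (fun j : {x : Fin n // x ∈ S} => (j : Fin n))
      hfinj Subtype.val_injective hf'
    set B : Matrix {x : Fin n // x ∈ S} {x : Fin n // x ∈ S} (PR k n) :=
      Matrix.of fun i j => if (j : Fin n) ∈ V (f i) then (X (f i, (j : Fin n)) : PR k n) else 0
      with hB
    let A : Matrix {x : Fin n // x ∈ S} {x : Fin n // x ∈ S} (FF k n) :=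
      B.map (algebraMap (PR k n) (FF k n))
    have hdetA : A.det ≠ 0 := by
      have h1 : A.det = algebraMap (PR k n) (FF k n) B.det :=
        (RingHom.map_det _ B).symm
      rw [h1]
      intro h0
      exact hdet ((map_eq_zero_iff _ (IsFractionRing.injective (PR k n) (FF k n))).mp h0)
    have hA : ∀ i j, A i j = MV k n V (f i) (j : Fin n) := by
      intro i j
      show algebraMap (PR k n) (FF k n) (B i j) = _
      rw [hB]
      simp only [Matrix.of_apply, apply_ite (algebraMap (PR k n) (FF k n)), map_zero]
      rfl
    show LinearIndependent (FF k n)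
      (fun j : {x : Fin n // x ∈ S} => fun i : Fin k => MV k n V i (j : Fin n))
    refine Fintype.linearIndependent_iff.mpr ?_
    intro g hg i
    have hvec : A.mulVec g = 0 := by
      funext i'
      have hgi := congrFun hg (f i')
      simp only [Finset.sum_apply, Pi.smul_apply, smul_eq_mul, Pi.zero_apply] at hgi
      show (∑ j, A i' j * g j) = 0
      rw [Finset.sum_congr rfl (fun j _ => by rw [hA i' j, mul_comm])]
      exact hgi
    have := Matrix.eq_zero_of_mulVec_eq_zero hdetA hvec
    exact congrFun this i
end

section
/- Let V_1, …, V_k be subsets of {1,…,n} and M_V the associated variable-valued matrix over K. A nonempty set S ⊆ {1,…,n} is a circuit of the column matroid M(V) — i.e., the columns of M_V indexed by S are linearly dependent over K while the columns indexed by any proper subset of S are linearly independent — if and only if |{i : V_i ∩ S ≠ ∅}| = |S| − 1 and every nonempty proper subset U ⊊ S satisfies |{i : V_i ∩ U ≠ ∅}| ≥ |U|. -/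
open MvPolynomial Matrix

/-- The key lemma: the columns of `M_V` indexed by `U` are linearly independent over `K`
iff Hall's condition holds for `U`. -/
theorem colsIndep_iff_hall (k n : ℕ) (V : Fin k → Finset (Fin n)) (U : Finset (Fin n)) :
    ColsIndep (MV k n V) U ↔
      ∀ U' ⊆ U, U'.card ≤ (Finset.univ.filter fun i : Fin k => (V i ∩ U').Nonempty).card := by
  classical
  constructor
  · -- independent → Hall
    intro hI U' hU'U
    by_contra hlt
    push_neg at hlt
    -- restrict to the columns of `U'`
    have hI' : ColsIndep (MV k n V) U' := by
      have := hI.comp (fun v : {x : Fin n // x ∈ U'} => (⟨(v : Fin n), hU'U v.2⟩ :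
          {x : Fin n // x ∈ U})) (fun a b hab =>
        Subtype.ext (by simpa using congrArg Subtype.val hab))
      exact this
    set N' : Finset (Fin k) := Finset.univ.filter fun i : Fin k => (V i ∩ U').Nonempty with hN'
    -- columns of `U'` vanish outside `N'`
    have hvanish : ∀ (v : {x : Fin n // x ∈ U'}) (i : Fin k), i ∉ N' →
        MV k n V i (v : Fin n) = 0 := by
      intro v i hi
      have : ¬ (V i ∩ U').Nonempty := by
        intro h
        exact hi (Finset.mem_filter.2 ⟨Finset.mem_univ _, h⟩)
      have hvn : (v : Fin n) ∉ V i := by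
        intro hv
        exact this ⟨v, Finset.mem_inter.2 ⟨hv, v.2⟩⟩
      simp [MV, hvn]
    -- compose with the restriction to coordinates in `N'`
    let T : (Fin k → FF k n) →ₗ[FF k n] ({i : Fin k // i ∈ N'} → FF k n) :=
      LinearMap.funLeft (FF k n) (FF k n) (fun i => (i : Fin k))
    have hIT : LinearIndependent (FF k n)
        (fun v : {x : Fin n // x ∈ U'} => T (fun i : Fin k => MV k n V i (v : Fin n))) := by
      rw [Fintype.linearIndependent_iff]
      intro g hg
      have hzero : (∑ v : {x : Fin n // x ∈ U'},
          g v • (fun i : Fin k => MV k n V i (v : Fin n))) = 0 := by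
        funext i
        by_cases hi : i ∈ N'
        · have := congrFun hg ⟨i, hi⟩
          simpa [T, LinearMap.funLeft, Finset.sum_apply] using this
        · simp only [Finset.sum_apply, Pi.smul_apply, Pi.zero_apply]
          refine Finset.sum_eq_zero fun v _ => ?_
          rw [hvanish v i hi, smul_zero]
      exact Fintype.linearIndependent_iff.1 hI' g hzero
    have hcard := hIT.fintype_card_le_finrank
    rw [Module.finrank_pi] at hcard
    simp only [Fintype.card_coe] at hcard
    omega
  · -- Hall → independent
    intro hHall
    -- Hall's marriage theorem gives a system of distinct representatives
    have hmt : ∃ f : {x : Fin n // x ∈ U} → Fin k, Function.Injective f ∧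
        ∀ v : {x : Fin n // x ∈ U}, (v : Fin n) ∈ V (f v) := by
      have := (Finset.all_card_le_biUnion_card_iff_exists_injective
        (fun v : {x : Fin n // x ∈ U} =>
          Finset.univ.filter fun i : Fin k => (v : Fin n) ∈ V i)).1 ?_
      · obtain ⟨f, hf1, hf2⟩ := this
        exact ⟨f, hf1, fun v => (Finset.mem_filter.1 (hf2 v)).2⟩
      · intro s
        have himg : (s.image (fun v : {x : Fin n // x ∈ U} => (v : Fin n))) ⊆ U := by
          intro x hx
          obtain ⟨v, _, rfl⟩ := Finset.mem_image.1 hx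
          exact v.2
        have hcardim : (s.image (fun v : {x : Fin n // x ∈ U} => (v : Fin n))).card = s.card :=
          Finset.card_image_of_injective _ (fun a b hab => Subtype.ext hab)
        have hb : s.biUnion (fun v => Finset.univ.filter fun i : Fin k => (v : Fin n) ∈ V i) =
            Finset.univ.filter fun i : Fin k =>
              (V i ∩ s.image (fun v : {x : Fin n // x ∈ U} => (v : Fin n))).Nonempty := by
          ext i
          simp only [Finset.mem_biUnion, Finset.mem_filter, Finset.mem_univ, true_and]
          constructor
          · rintro ⟨v, hvs, hvi⟩
            exact ⟨v, Finset.mem_inter.2 ⟨hvi, Finset.mem_image_of_mem _ hvs⟩⟩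
          · rintro ⟨x, hx⟩
            obtain ⟨hx1, hx2⟩ := Finset.mem_inter.1 hx
            obtain ⟨v, hvs, rfl⟩ := Finset.mem_image.1 hx2
            exact ⟨v, hvs, hx1⟩
        rw [hb]
        calc s.card = (s.image (fun v : {x : Fin n // x ∈ U} => (v : Fin n))).card :=
              hcardim.symm
          _ ≤ _ := hHall _ himg
    obtain ⟨f, hfinj, hfmem⟩ := hmt
    -- the square submatrix over PR given by the matching rows
    let A : Matrix {x : Fin n // x ∈ U} {x : Fin n // x ∈ U} (PR k n) :=
      Matrix.of fun u v => if (v : Fin n) ∈ V (f u) then X (f u, (v : Fin n)) else 0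
    -- specialize variables: 1 on the matching, 0 elsewhere
    let pt : Fin k × Fin n → ℝ := fun p =>
      if p ∈ Finset.univ.image (fun u : {x : Fin n // x ∈ U} => ((f u : Fin k), (u : Fin n)))
      then 1 else 0
    have hmap : A.map (eval pt) = 1 := by
      ext u v
      by_cases huv : u = v
      · subst huv
        have hmem : ((f u : Fin k), (u : Fin n)) ∈
            Finset.univ.image (fun w : {x : Fin n // x ∈ U} => ((f w : Fin k), (w : Fin n))) :=
          Finset.mem_image_of_mem _ (Finset.mem_univ u)
        simp [A, pt, Matrix.map_apply, hfmem u, hmem, Matrix.one_apply]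
      · have hnmem : ((f u : Fin k), (v : Fin n)) ∉
            Finset.univ.image (fun w : {x : Fin n // x ∈ U} => ((f w : Fin k), (w : Fin n))) := by
          intro hmem
          obtain ⟨w, _, hw⟩ := Finset.mem_image.1 hmem
          have h1 : f w = f u := congrArg Prod.fst hw
          have h2 : (w : Fin n) = (v : Fin n) := congrArg Prod.snd hw
          have hwv : w = v := Subtype.ext h2
          subst hwv
          exact huv (hfinj h1).symm
        have : Matrix.map A (⇑(eval pt)) u v = 0 := by
          by_cases hv : (v : Fin n) ∈ V (f u)
          · have hpt : pt ((f u : Fin k), (v : Fin n)) = 0 := if_neg hnmem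
            simp [A, Matrix.map_apply, hv, hpt]
          · simp [A, Matrix.map_apply, hv]
        rw [this, Matrix.one_apply_ne huv]
    have hdetA : A.det ≠ 0 := by
      intro h
      have : (A.map (eval pt)).det = 0 := by
        rw [← RingHom.mapMatrix_apply, ← RingHom.map_det, h, map_zero]
      rw [hmap, Matrix.det_one] at this
      exact one_ne_zero this
    -- the corresponding square submatrix of MV over the fraction field
    let B : Matrix {x : Fin n // x ∈ U} {x : Fin n // x ∈ U} (FF k n) :=
      Matrix.of fun u v => MV k n V (f u) (v : Fin n)
    have hB : B = A.map (algebraMap (PR k n) (FF k n)) := by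
      ext u v
      by_cases hv : (v : Fin n) ∈ V (f u) <;> simp [A, B, MV, Matrix.map_apply, hv]
    have hdetB : B.det ≠ 0 := by
      rw [hB, ← RingHom.mapMatrix_apply, ← RingHom.map_det]
      intro h
      exact hdetA (IsFractionRing.injective (PR k n) (FF k n) (by rw [h, map_zero]))
    have hBunit : IsUnit B := by
      rw [Matrix.isUnit_iff_isUnit_det]
      exact isUnit_iff_ne_zero.2 hdetB
    have hcols : LinearIndependent (FF k n) (fun v => Bᵀ v) :=
      Matrix.linearIndependent_cols_iff_isUnit.2 hBunit
    -- deduce independence of the full columns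
    rw [ColsIndep, Fintype.linearIndependent_iff]
    intro g hg
    refine Fintype.linearIndependent_iff.1 hcols g ?_
    funext u
    have h1 := congrFun hg (f u)
    simp only [Finset.sum_apply, Pi.smul_apply, Pi.zero_apply] at h1 ⊢
    exact h1

/-- a nonempty `S ⊆ {1,…,n}` is a circuit of the column matroid of `M_V`
(the columns indexed by `S` are dependent over `K` while those indexed by any proper
subset are independent) iff `|{i : V_i ∩ S ≠ ∅}| = |S| − 1` and every nonempty proper
subset `U ⊊ S` satisfies `|{i : V_i ∩ U ≠ ∅}| ≥ |U|`. -/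
theorem statement2 (k n : ℕ) (V : Fin k → Finset (Fin n)) (S : Finset (Fin n))
    (hS : S.Nonempty) :
    (¬ ColsIndep (MV k n V) S ∧
        ∀ U : Finset (Fin n), U ⊂ S → ColsIndep (MV k n V) U) ↔
      ((Finset.univ.filter fun i : Fin k => (V i ∩ S).Nonempty).card = S.card - 1 ∧
        ∀ U : Finset (Fin n), U ⊂ S → U.Nonempty →
          U.card ≤ (Finset.univ.filter fun i : Fin k => (V i ∩ U).Nonempty).card) := by
  classical
  constructor
  · rintro ⟨hdep, hprop⟩
    have h2 : ∀ U : Finset (Fin n), U ⊂ S → U.Nonempty →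
        U.card ≤ (Finset.univ.filter fun i : Fin k => (V i ∩ U).Nonempty).card := by
      intro U hUS _
      exact (colsIndep_iff_hall k n V U).1 (hprop U hUS) U (subset_refl U)
    refine ⟨?_, h2⟩
    -- first: a Hall failure exists, and it must be at S itself
    have hfail : ∃ U' ⊆ S, ¬ (U'.card ≤
        (Finset.univ.filter fun i : Fin k => (V i ∩ U').Nonempty).card) := by
      by_contra hall
      push_neg at hall
      exact hdep ((colsIndep_iff_hall k n V S).2 hall)
    obtain ⟨U', hU'S, hU'⟩ := hfail
    have hU'eq : U' = S := by
      by_contra hne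
      have hss : U' ⊂ S := hU'S.ssubset_of_ne hne
      exact hU' ((colsIndep_iff_hall k n V U').1 (hprop U' hss) U' (subset_refl U'))
    subst hU'eq
    push_neg at hU'
    -- so |N(S)| < |S|, hence |N(S)| ≤ |S| - 1
    have hle : (Finset.univ.filter fun i : Fin k => (V i ∩ U').Nonempty).card ≤
        U'.card - 1 := Nat.le_sub_one_of_lt hU'
    -- lower bound: |N(S)| ≥ |S| - 1 using S minus a point
    obtain ⟨x, hx⟩ := hS
    have hge : U'.card - 1 ≤
        (Finset.univ.filter fun i : Fin k => (V i ∩ U').Nonempty).card := by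
      by_cases h1 : U'.card = 1
      · simp [h1]
      · have hcard2 : 2 ≤ U'.card := by
          have : 1 ≤ U'.card := Finset.card_pos.2 ⟨x, hx⟩
          omega
        have hE : (U'.erase x) ⊂ U' := Finset.erase_ssubset hx
        have hEne : (U'.erase x).Nonempty := by
          rw [← Finset.card_pos, Finset.card_erase_of_mem hx]
          omega
        have hEcard := h2 _ hE hEne
        rw [Finset.card_erase_of_mem hx] at hEcard
        refine hEcard.trans (Finset.card_le_card ?_)
        intro i hi
        simp only [Finset.mem_filter, Finset.mem_univ, true_and] at hi ⊢
        obtain ⟨y, hy⟩ := hi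
        rw [Finset.mem_inter] at hy
        exact ⟨y, Finset.mem_inter.2 ⟨hy.1, Finset.mem_of_mem_erase hy.2⟩⟩
    omega
  · rintro ⟨hcard, hhall⟩
    constructor
    · intro hind
      have := (colsIndep_iff_hall k n V S).1 hind S (subset_refl S)
      have hpos : 1 ≤ S.card := Finset.card_pos.2 hS
      omega
    · intro U hUS
      refine (colsIndep_iff_hall k n V U).2 ?_
      intro U' hU'U
      rcases U'.eq_empty_or_nonempty with rfl | hne
      · simp
      · exact hhall U' (lt_of_le_of_lt hU'U hUS) hne
end

section
/- Let V_1, …, V_k be subsets of {1,…,n} and M_V the associated variable-valued matrix over K. The k rows of M_V are linearly independent over K (equivalently, M_V has rank k) if and only if every nonempty subset T ⊆ {1,…,k} satisfies |∪_{i∈T} V_i| ≥ |T|. -/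
open MvPolynomial

lemma prod_X_eq_monomial' {σ R ι : Type*} [CommSemiring R] (s : Finset ι) (d : ι → σ) :
    ∏ i ∈ s, (X (d i) : MvPolynomial σ R)
      = monomial (∑ i ∈ s, Finsupp.single (d i) 1) 1 := by
  classical
  induction s using Finset.induction with
  | empty => simp
  | insert _ _ h ih =>
    rw [Finset.prod_insert h, Finset.sum_insert h, ih, X, monomial_mul, one_mul]

/-- the `k` rows of `M_V` are linearly independent over `K`
(equivalently, `M_V` has rank `k`) iff every nonempty `T ⊆ {1,…,k}` satisfies
`|∪_{i∈T} V_i| ≥ |T|`. -/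
theorem statement3 (k n : ℕ) (V : Fin k → Finset (Fin n)) :
    LinearIndependent (FF k n) (fun i : Fin k => fun j : Fin n => MV k n V i j) ↔
      ∀ T : Finset (Fin k), T.Nonempty → T.card ≤ (T.biUnion V).card := by
  classical
  constructor
  · intro h T _
    set U := T.biUnion V with hU
    set K := FF k n
    have hVU : ∀ i ∈ T, V i ⊆ U := fun i hi => Finset.subset_biUnion_of_mem V hi
    set W : Submodule K (Fin n → K) :=
      { carrier := {v | ∀ j, j ∉ U → v j = 0}
        add_mem' := fun ha hb j hj => by
          simp only [Pi.add_apply, ha j hj, hb j hj, add_zero]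
        zero_mem' := fun j hj => rfl
        smul_mem' := fun c v hv j hj => by
          simp only [Pi.smul_apply, hv j hj, smul_zero] } with hW
    set r : (Fin n → K) →ₗ[K] ({x : Fin n // x ∈ U} → K) :=
      LinearMap.funLeft K K (fun j => (j : Fin n)) with hr
    have hsub : LinearIndependent K
        (fun i : {x : Fin k // x ∈ T} => fun j : Fin n => MV k n V i j) :=
      h.comp _ Subtype.val_injective
    have hrange : ∀ i : {x : Fin k // x ∈ T},
        (fun j : Fin n => MV k n V i j) ∈ W := by
      intro i j hj
      have : j ∉ V i := fun hmem => hj (hVU i i.2 hmem)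
      simp [MV, this]
    have hdis : Disjoint (Submodule.span K
        (Set.range (fun i : {x : Fin k // x ∈ T} => fun j : Fin n => MV k n V i j)))
        (LinearMap.ker r) := by
      rw [Submodule.disjoint_def]
      intro v hv hv0
      have hvW : v ∈ W := by
        refine Submodule.span_le.2 ?_ hv
        rintro _ ⟨i, rfl⟩
        exact hrange i
      have hv0' : ∀ j : {x : Fin n // x ∈ U}, v j = 0 := by
        intro j
        have := LinearMap.mem_ker.1 hv0
        exact congrFun this j
      funext j
      by_cases hj : j ∈ U
      · exact hv0' ⟨j, hj⟩
      · exact hvW j hj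
    have hind := hsub.map hdis
    have hcard := hind.fintype_card_le_finrank
    simpa [Module.finrank_fintype_fun_eq_card] using hcard
  · intro hall
    set K := FF k n
    have hall' : ∀ s : Finset (Fin k), s.card ≤ (s.biUnion V).card := by
      intro s
      rcases s.eq_empty_or_nonempty with rfl | hs
      · simp
      · exact hall s hs
    obtain ⟨f, hfinj, hfV⟩ := (Finset.all_card_le_biUnion_card_iff_exists_injective V).1 hall'
    set P : Matrix (Fin k) (Fin k) (PR k n) :=
      Matrix.of fun i i' => if f i' ∈ V i then (X (i, f i') : PR k n) else 0 with hP
    set m₀ : (Fin k × Fin n) →₀ ℕ := ∑ i, Finsupp.single (i, f i) 1 with hm₀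
    have key : ∀ σ : Equiv.Perm (Fin k),
        coeff m₀ (∏ i, P (σ i) i) = if σ = 1 then 1 else 0 := by
      intro σ
      by_cases hσ : ∀ i, f i ∈ V (σ i)
      · have hprod : ∏ i, P (σ i) i
            = monomial (∑ i, Finsupp.single ((σ i, f i) : Fin k × Fin n) 1) 1 := by
          rw [← prod_X_eq_monomial']
          exact Finset.prod_congr rfl fun i _ => by simp [P, hσ i]
        have hiff : (∑ i, Finsupp.single ((σ i, f i) : Fin k × Fin n) 1 = m₀) ↔ σ = 1 := by
          constructor
          · intro hs
            have hfix : ∀ i, σ i = i := by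
              intro i
              by_contra hne
              have hL : 0 < (∑ j, Finsupp.single ((σ j, f j) : Fin k × Fin n) 1)
                  ((σ i, f i) : Fin k × Fin n) := by
                rw [Finsupp.finset_sum_apply]
                refine Finset.sum_pos' (fun j _ => Nat.zero_le _)
                  ⟨i, Finset.mem_univ i, ?_⟩
                simp
              have hR : m₀ ((σ i, f i) : Fin k × Fin n) = 0 := by
                rw [hm₀, Finsupp.finset_sum_apply]
                refine Finset.sum_eq_zero fun j _ => ?_
                rw [Finsupp.single_apply, if_neg]
                intro hEq
                have h1 : j = σ i := congrArg Prod.fst hEq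
                have h2 : f j = f i := congrArg Prod.snd hEq
                exact hne (by rw [← h1, hfinj h2])
              rw [hs] at hL
              omega
            exact Equiv.ext hfix
          · rintro rfl
            simp [hm₀]
        rw [hprod, coeff_monomial, if_congr hiff rfl rfl]
      · push_neg at hσ
        obtain ⟨i, hi⟩ := hσ
        have h1 : ∏ i', P (σ i') i' = 0 :=
          Finset.prod_eq_zero (Finset.mem_univ i) (by simp [P, hi])
        have h2 : σ ≠ 1 := by
          rintro rfl
          exact hi (hfV i)
        simp [h1, h2]
    have hdetP : coeff m₀ P.det = 1 := by
      rw [Matrix.det_apply, coeff_sum]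
      have : ∀ σ : Equiv.Perm (Fin k),
          coeff m₀ (Equiv.Perm.sign σ • ∏ i, P (σ i) i)
            = if σ = 1 then 1 else 0 := by
        intro σ
        rw [coeff_smul, key σ]
        rcases eq_or_ne σ 1 with rfl | hσ
        · simp
        · simp [hσ]
      rw [Finset.sum_congr rfl fun σ _ => this σ]
      simp
    have hdetne : P.det ≠ 0 := by
      intro h0
      rw [h0] at hdetP
      simp at hdetP
    have hmap : (MV k n V).submatrix id f = P.map (algebraMap (PR k n) K) := by
      ext i i'
      simp only [Matrix.submatrix_apply, id_eq, Matrix.map_apply, MV, P, Matrix.of_apply]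
      split_ifs <;> simp [K]
    have hdetN : ((MV k n V).submatrix id f).det ≠ 0 := by
      rw [hmap,
        show P.map ⇑(algebraMap (PR k n) K) = (algebraMap (PR k n) K).mapMatrix P from rfl,
        ← RingHom.map_det]
      intro h0
      exact hdetne (IsFractionRing.injective (PR k n) K (by rw [h0, map_zero]))
    have hunit : IsUnit ((MV k n V).submatrix id f) :=
      (Matrix.isUnit_iff_isUnit_det _).2 (isUnit_iff_ne_zero.2 hdetN)
    have hrows := Matrix.linearIndependent_rows_iff_isUnit.2 hunit
    exact LinearIndependent.of_comp (LinearMap.funLeft K K f) hrows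
end

section
/- For every admissible Wilson loop diagram W = (𝒫,[n]), the matrix M_{V(𝒫)} has rank |𝒫| over the field K. -/
/-- `b` lies strictly inside the cyclic interval going (in the increasing cyclic direction)
from `a` to `c` in `ZMod n`. -/
def Inside {n : ℕ} (a b c : ZMod n) : Prop :=
  0 < (b - a).val ∧ (b - a).val < (c - a).val

/-- Two propagators (given as ordered pairs representing unordered pairs) cross:
exactly one endpoint of `q` lies strictly inside each of the two cyclic intervals into
which the endpoints of `p` divide `ZMod n`. -/
def Cross {n : ℕ} (p q : ZMod n × ZMod n) : Prop :=
  (Inside p.1 q.1 p.2 ∧ Inside p.2 q.2 p.1) ∨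
    (Inside p.1 q.2 p.2 ∧ Inside p.2 q.1 p.1)

/-- The support `V_p = {i, i+1, j, j+1}` of a propagator `p = (i,j)`. -/
def propSupp {n : ℕ} (p : ZMod n × ZMod n) : Finset (ZMod n) :=
  {p.1, p.1 + 1, p.2, p.2 + 1}

/-- The support `V_P` of a multiset of propagators. -/
def multiSupp {n : ℕ} (P : Multiset (ZMod n × ZMod n)) : Finset (ZMod n) :=
  (P.map propSupp).sup

/-- A Wilson loop diagram `(Ps, [n])` is admissible: no two propagators cross,
every nonempty subset `P` of the propagators satisfies `|V_P| ≥ |P| + 3`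
(local density), and `n ≥ |Ps| + 4` (global density). -/
def Admissible (n : ℕ) (Ps : Multiset (ZMod n × ZMod n)) : Prop :=
  (∀ p ∈ Ps, ∀ q ∈ Ps, ¬ Cross p q) ∧
  (∀ P : Multiset (ZMod n × ZMod n), P ≤ Ps → P ≠ 0 →
    Multiset.card P + 3 ≤ (multiSupp P).card) ∧
  Multiset.card Ps + 4 ≤ n


open MvPolynomial

/-- The polynomial ring `ℝ[x_{p,v}]` with variables indexed by propagator rows and
vertices of the diagram. -/
abbrev WR (k n : ℕ) : Type := MvPolynomial (Fin k × ZMod n) ℝ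

/-- Its field of fractions `K`. -/
abbrev WF (k n : ℕ) : Type := FractionRing (WR k n)

/-- The matrix `M_{V(𝒫)}` of a Wilson loop diagram, with entries in `ℝ[x]`:
the `(p,v)` entry is `x_{p,v}` if `v ∈ V_p` and `0` otherwise. -/
noncomputable def MWpoly (k n : ℕ) (P : Fin k → ZMod n × ZMod n) :
    Matrix (Fin k) (ZMod n) (WR k n) :=
  Matrix.of fun i v => if v ∈ propSupp (P i) then X (i, v) else 0

/-- The matrix `M_{V(𝒫)}` of a Wilson loop diagram, over the field `K`. -/
noncomputable def MW (k n : ℕ) (P : Fin k → ZMod n × ZMod n) :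
    Matrix (Fin k) (ZMod n) (WF k n) :=
  Matrix.of fun i v => algebraMap (WR k n) (WF k n) (MWpoly k n P i v)

/-- From admissibility, Hall's marriage theorem produces a system of distinct
representatives: an injective choice of a support vertex for each propagator. -/
lemma hall_exists (k n : ℕ) [NeZero n] (P : Fin k → ZMod n × ZMod n)
    (hW : Admissible n (Multiset.map P Finset.univ.val)) :
    ∃ f : Fin k → ZMod n, Function.Injective f ∧ ∀ i, f i ∈ propSupp (P i) := by
  classical
  rw [← Finset.all_card_le_biUnion_card_iff_exists_injective]
  intro s
  rcases s.eq_empty_or_nonempty with rfl | hs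
  · simp
  have hle : Multiset.map P s.val ≤ Multiset.map P Finset.univ.val :=
    Multiset.map_le_map (Finset.val_le_iff.mpr (Finset.subset_univ s))
  have hne : Multiset.map P s.val ≠ 0 := by
    simp only [ne_eq, Multiset.map_eq_zero, Finset.val_eq_zero]
    exact Finset.nonempty_iff_ne_empty.mp hs
  have h2 := hW.2.1 (Multiset.map P s.val) hle hne
  have hsupp : multiSupp (Multiset.map P s.val)
      = s.biUnion (fun i => propSupp (P i)) := by
    rw [multiSupp, Multiset.map_map, ← Finset.sup_def, Finset.sup_eq_biUnion]
    rfl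
  have hcard : Multiset.card (Multiset.map P s.val) = s.card := by
    simp
  rw [hsupp, hcard] at h2
  omega

theorem rank_submatrix_ge (k n : ℕ) [NeZero n] (P : Fin k → ZMod n × ZMod n)
    (f : Fin k → ZMod n) :
    ((MW k n P).submatrix id f).rank ≤ (MW k n P).rank := by
  classical
  rw [Matrix.rank, Matrix.rank]
  apply Submodule.finrank_mono
  rintro x ⟨c, rfl⟩
  refine ⟨fun v => ∑ j, if v = f j then c j else 0, ?_⟩
  ext i
  simp only [Matrix.mulVecLin_apply, Matrix.mulVec, dotProduct,
    Matrix.submatrix_apply, id_eq]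
  calc ∑ v, (MW k n P) i v * (∑ j, if v = f j then c j else 0)
      = ∑ v, ∑ j, if v = f j then (MW k n P) i v * c j else 0 := by
        simp [Finset.mul_sum, mul_ite]
    _ = ∑ j, ∑ v, if v = f j then (MW k n P) i v * c j else 0 := Finset.sum_comm
    _ = ∑ j, (MW k n P) i (f j) * c j := by simp

/-- for an admissible Wilson loop diagram, the matrix `M_{V(𝒫)}` has
rank `|𝒫|` over `K`. -/
theorem statement4 (k n : ℕ) [NeZero n] (P : Fin k → ZMod n × ZMod n)
    (hW : Admissible n (Multiset.map P Finset.univ.val)) :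
    (MW k n P).rank = k := by
  classical
  obtain ⟨f, hfinj, hfmem⟩ := hall_exists k n P hW
  -- the square submatrix over the polynomial ring
  set A : Matrix (Fin k) (Fin k) (WR k n) := (MWpoly k n P).submatrix id f with hA
  -- evaluating the variables at the indicator of the system of distinct representatives
  -- sends `A` to the identity matrix, so `A.det ≠ 0`
  have hdetA : A.det ≠ 0 := by
    intro h0
    have hmap := congrArg
      (MvPolynomial.eval (fun q : Fin k × ZMod n => if q.2 = f q.1 then (1:ℝ) else 0)) h0
    rw [map_zero, RingHom.map_det] at hmap
    have hone : (MvPolynomial.eval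
        fun q : Fin k × ZMod n => if q.2 = f q.1 then (1:ℝ) else 0).mapMatrix A
        = 1 := by
      ext i j
      simp only [hA, RingHom.mapMatrix_apply, Matrix.map_apply, Matrix.submatrix_apply,
        id_eq, MWpoly, Matrix.of_apply]
      by_cases hij : i = j
      · subst hij
        rw [if_pos (hfmem i), MvPolynomial.eval_X, if_pos rfl, Matrix.one_apply_eq]
      · rw [Matrix.one_apply_ne hij]
        split_ifs with h
        · rw [MvPolynomial.eval_X, if_neg (fun he => hij (hfinj he).symm)]
        · exact map_zero _
    rw [hone, Matrix.det_one] at hmap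
    norm_num at hmap
  -- the corresponding submatrix over the fraction field has nonzero determinant
  have hBmap : (MW k n P).submatrix id f = A.map (algebraMap (WR k n) (WF k n)) := rfl
  have hdetB : ((MW k n P).submatrix id f).det ≠ 0 := by
    rw [hBmap, ← RingHom.mapMatrix_apply, ← RingHom.map_det]
    intro h
    exact hdetA (IsFractionRing.injective (WR k n) (WF k n) (h.trans (map_zero _).symm))
  have hunit : IsUnit ((MW k n P).submatrix id f) :=
    (Matrix.isUnit_iff_isUnit_det _).mpr (isUnit_iff_ne_zero.mpr hdetB)
  have hranksub : ((MW k n P).submatrix id f).rank = k := by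
    rw [Matrix.rank_of_isUnit _ hunit, Fintype.card_fin]
  have h1 : k ≤ (MW k n P).rank := by
    have h3 := rank_submatrix_ge k n P f
    omega
  have h2 : (MW k n P).rank ≤ k :=
    (Matrix.rank_le_card_height _).trans (Fintype.card_fin k).le
  omega
end

section
/- Let M be a matroid with at least one base on a finite ground set E equipped with a linear order, and let all bases have size r. Order r-element subsets by Gale dominance: B ≤ B' if and only if for every i, the i-th smallest element of B is less than or equal to the i-th smallest element of B'. Then the set of bases of M has a unique minimum and a unique maximum with respect to this Gale order. -/
/-- The Gale (dominance) order on `r`-element finite subsets of a linearly ordered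
type: `B ≤ B'` iff for every `i`, the `i`-th smallest element of `B` is at most the
`i`-th smallest element of `B'`. -/
def GaleLE {α : Type*} [LinearOrder α] (r : ℕ) (B B' : Finset α) : Prop :=
  ∃ (h : B.card = r) (h' : B'.card = r),
    ∀ i : Fin r, (B.orderIsoOfFin h i : α) ≤ (B'.orderIsoOfFin h' i : α)

open Finset

section aux
variable {α : Type*} [LinearOrder α]

lemma emb_le_of_count {t : Finset α} {n : ℕ} (ht : t.card = n) {k : ℕ} (hk : k < n)
    {v : α} (hcard : k + 1 ≤ (t.filter (· ≤ v)).card) :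
    t.orderEmbOfFin ht ⟨k, hk⟩ ≤ v := by
  by_contra hlt
  push_neg at hlt
  have hsub : t.filter (· ≤ v) ⊆ (Finset.univ : Finset (Fin k)).image
      (fun j => t.orderEmbOfFin ht (Fin.castLE hk.le j)) := by
    intro y hy
    rw [mem_filter] at hy
    obtain ⟨hyt, hyv⟩ := hy
    obtain ⟨j, hj⟩ : ∃ j : Fin n, t.orderEmbOfFin ht j = y := by
      have hr := t.range_orderEmbOfFin ht
      show y ∈ Set.range (t.orderEmbOfFin ht)
      rw [hr]; exact hyt
    have hjk : (j : ℕ) < k := by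
      by_contra h'
      push_neg at h'
      have hle : t.orderEmbOfFin ht ⟨k, hk⟩ ≤ t.orderEmbOfFin ht j :=
        (t.orderEmbOfFin ht).monotone (by exact h')
      rw [hj] at hle
      exact absurd (hle.trans hyv) (not_le.2 hlt)
    refine mem_image.2 ⟨⟨j, hjk⟩, mem_univ _, ?_⟩
    rw [← hj]
    congr 1
  have hcount : (t.filter (· ≤ v)).card ≤ k := by
    calc (t.filter (· ≤ v)).card ≤ _ := card_le_card hsub
    _ ≤ (Finset.univ : Finset (Fin k)).card := card_image_le
    _ = k := by simp
  omega

lemma emb_lt_of_count {t : Finset α} {n : ℕ} (ht : t.card = n) {k : ℕ} (hk : k < n)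
    {v : α} (hcard : k + 1 ≤ (t.filter (· < v)).card) :
    t.orderEmbOfFin ht ⟨k, hk⟩ < v := by
  by_contra hlt
  push_neg at hlt
  have hsub : t.filter (· < v) ⊆ (Finset.univ : Finset (Fin k)).image
      (fun j => t.orderEmbOfFin ht (Fin.castLE hk.le j)) := by
    intro y hy
    rw [mem_filter] at hy
    obtain ⟨hyt, hyv⟩ := hy
    obtain ⟨j, hj⟩ : ∃ j : Fin n, t.orderEmbOfFin ht j = y := by
      have hr := t.range_orderEmbOfFin ht
      show y ∈ Set.range (t.orderEmbOfFin ht)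
      rw [hr]; exact hyt
    have hjk : (j : ℕ) < k := by
      by_contra h'
      push_neg at h'
      have hle : t.orderEmbOfFin ht ⟨k, hk⟩ ≤ t.orderEmbOfFin ht j :=
        (t.orderEmbOfFin ht).monotone (by exact h')
      rw [hj] at hle
      exact absurd (hyv.trans_le hlt) (not_lt.2 hle)
    refine mem_image.2 ⟨⟨j, hjk⟩, mem_univ _, ?_⟩
    rw [← hj]
    congr 1
  have hcount : (t.filter (· < v)).card ≤ k := by
    calc (t.filter (· < v)).card ≤ _ := card_le_card hsub
    _ ≤ (Finset.univ : Finset (Fin k)).card := card_image_le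
    _ = k := by simp
  omega

lemma count_le_emb {s : Finset α} {m : ℕ} (hs : s.card = m) {k : ℕ} (hk : k < m) :
    k + 1 ≤ (s.filter (· ≤ s.orderEmbOfFin hs ⟨k, hk⟩)).card := by
  have hinj : Function.Injective (fun j : Fin (k+1) => s.orderEmbOfFin hs (Fin.castLE hk j)) := by
    intro a b hab
    have := (s.orderEmbOfFin hs).injective hab
    exact Fin.castLE_injective _ this
  have hsub : (Finset.univ : Finset (Fin (k+1))).image
      (fun j => s.orderEmbOfFin hs (Fin.castLE hk j)) ⊆
      s.filter (· ≤ s.orderEmbOfFin hs ⟨k, hk⟩) := by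
    intro y hy
    obtain ⟨j, _, rfl⟩ := mem_image.1 hy
    refine mem_filter.2 ⟨orderEmbOfFin_mem _ _ _, ?_⟩
    exact (s.orderEmbOfFin hs).monotone (by exact Fin.is_le j)
  calc k + 1 = ((Finset.univ : Finset (Fin (k+1))).image
      (fun j => s.orderEmbOfFin hs (Fin.castLE hk j))).card := by
        rw [card_image_of_injective _ hinj]; simp
  _ ≤ _ := card_le_card hsub

lemma emb_mono_subset {s t : Finset α} {m n : ℕ} (hs : s.card = m) (ht : t.card = n)
    (hst : s ⊆ t) {k : ℕ} (hks : k < m) (hkt : k < n) :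
    t.orderEmbOfFin ht ⟨k, hkt⟩ ≤ s.orderEmbOfFin hs ⟨k, hks⟩ := by
  apply emb_le_of_count ht hkt
  calc k + 1 ≤ (s.filter (· ≤ s.orderEmbOfFin hs ⟨k, hks⟩)).card := count_le_emb hs hks
  _ ≤ (t.filter (· ≤ s.orderEmbOfFin hs ⟨k, hks⟩)).card :=
      card_le_card (filter_subset_filter _ hst)

lemma lex_of_getElem : ∀ (j : ℕ) (u a : List α) (hu : j < u.length) (ha : j < a.length),
    (∀ k (hk : k < j), u[k]'(hk.trans hu) = a[k]'(hk.trans ha)) →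
    u[j]'hu < a[j]'ha → List.Lex (· < ·) u a := by
  intro j
  induction j with
  | zero =>
    intro u a hu ha _ hlt
    match u, a with
    | x :: u, y :: a => exact List.Lex.rel (by simpa using hlt)
  | succ n ih =>
    intro u a hu ha heq hlt
    match u, a with
    | x :: u, y :: a =>
      have hxy : x = y := by simpa using heq 0 (Nat.succ_pos n)
      subst hxy
      refine List.Lex.cons (ih u a (by simpa using hu) (by simpa using ha) ?_ (by simpa using hlt))
      intro k hk
      simpa using heq (k+1) (by omega)

lemma gale_min {α : Type*} [Fintype α] [LinearOrder α] (M : Matroid α) (r : ℕ)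
    (hex : ∃ B, M.IsBase B) (hr : ∀ B, M.IsBase B → B.ncard = r) :
    ∃! B : Finset α, M.IsBase ↑B ∧ ∀ B' : Finset α, M.IsBase ↑B' → GaleLE r B B' := by
  classical
  have hcardB : ∀ B : Finset α, M.IsBase ↑B → B.card = r := by
    intro B hB
    have := hr _ hB
    rwa [Set.ncard_coe_finset] at this
  set 𝓑 : Finset (Finset α) := Finset.univ.filter (fun B : Finset α => M.IsBase ↑B) with h𝓑
  have hne : 𝓑.Nonempty := by
    obtain ⟨B, hB⟩ := hex
    refine ⟨(Set.toFinite B).toFinset, ?_⟩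
    rw [h𝓑, mem_filter]
    exact ⟨mem_univ _, by rwa [Set.Finite.coe_toFinset]⟩
  obtain ⟨A, hAmem, hmin⟩ := 𝓑.exists_min_image (fun B => B.sort (· ≤ ·)) hne
  have hAbase : M.IsBase ↑A := (mem_filter.1 hAmem).2
  have hAcard : A.card = r := hcardB A hAbase
  have claim : ∀ B' : Finset α, M.IsBase ↑B' → GaleLE r A B' := by
    intro B' hB'
    have hB'card : B'.card = r := hcardB B' hB'
    refine ⟨hAcard, hB'card, ?_⟩
    intro i
    rw [coe_orderIsoOfFin_apply, coe_orderIsoOfFin_apply]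
    by_contra hlt
    push_neg at hlt
    set a := A.orderEmbOfFin hAcard with ha
    set b := B'.orderEmbOfFin hB'card with hb
    -- the first i elements of A
    set ALT : Finset α := (Finset.univ : Finset (Fin i.val)).image
      (fun j => a (Fin.castLE i.isLt.le j)) with hALT
    have hALTcard : ALT.card = i.val := by
      rw [hALT, card_image_of_injective _
        (fun u v huv => Fin.castLE_injective _ (a.injective huv))]
      simp
    have hALTsubA : ALT ⊆ A := by
      intro y hy
      obtain ⟨j, _, rfl⟩ := mem_image.1 hy
      exact orderEmbOfFin_mem _ _ _
    have hALTlt : ∀ y ∈ ALT, y < a i := by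
      intro y hy
      obtain ⟨j, _, rfl⟩ := mem_image.1 hy
      exact a.strictMono (by exact j.isLt)
    -- the first i+1 elements of B'
    set I : Finset α := (Finset.univ : Finset (Fin (i.val + 1))).image
      (fun j => b (Fin.castLE i.isLt j)) with hI
    have hIcard : I.card = i.val + 1 := by
      rw [hI, card_image_of_injective _
        (fun u v huv => Fin.castLE_injective _ (b.injective huv))]
      simp
    have hIsubB' : I ⊆ B' := by
      intro y hy
      obtain ⟨j, _, rfl⟩ := mem_image.1 hy
      exact orderEmbOfFin_mem _ _ _
    have hIle : ∀ y ∈ I, y ≤ b i := by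
      intro y hy
      obtain ⟨j, _, rfl⟩ := mem_image.1 hy
      exact b.monotone (by exact Fin.is_le j)
    -- augment
    have hALTindep : M.Indep ↑ALT := hAbase.indep.subset (coe_subset.2 hALTsubA)
    have hIindep : M.Indep ↑I := hB'.indep.subset (coe_subset.2 hIsubB')
    obtain ⟨x, hxmem, hxindep⟩ := hALTindep.augment hIindep (by
      rw [Set.encard_coe_eq_coe_finsetCard, Set.encard_coe_eq_coe_finsetCard,
        hALTcard, hIcard]
      exact_mod_cast Nat.lt_succ_self _)
    obtain ⟨hxI, hxALT⟩ := hxmem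
    have hxI' : x ∈ I := hxI
    have hxALT' : x ∉ ALT := fun h => hxALT h
    have hxlt : x < a i := lt_of_le_of_lt (hIle x hxI') hlt
    -- extend to a base
    obtain ⟨B₁, hB₁base, hB₁sub⟩ := hxindep.exists_isBase_superset
    set B₁f : Finset α := (Set.toFinite B₁).toFinset with hB₁f
    have hB₁coe : (↑B₁f : Set α) = B₁ := Set.Finite.coe_toFinset _
    have hB₁base' : M.IsBase ↑B₁f := by rwa [hB₁coe]
    have hB₁card : B₁f.card = r := hcardB _ hB₁base'
    set c := B₁f.orderEmbOfFin hB₁card with hc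
    have hALTsubB₁ : ALT ⊆ B₁f := by
      intro y hy
      have : y ∈ B₁ := hB₁sub (Set.mem_insert_of_mem _ hy)
      rwa [← hB₁coe] at this
    have hxB₁ : x ∈ B₁f := by
      have : x ∈ B₁ := hB₁sub (Set.mem_insert _ _)
      rwa [← hB₁coe] at this
    -- the k-th element of ALT is a_k
    have hALTemb : (fun j : Fin i.val => a (Fin.castLE i.isLt.le j)) =
        ALT.orderEmbOfFin hALTcard := by
      apply orderEmbOfFin_unique
      · intro j
        exact mem_image.2 ⟨j, mem_univ _, rfl⟩
      · intro u v huv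
        exact a.strictMono (by exact huv)
    -- c_k ≤ a_k for k < i
    have hck : ∀ k (hk : k < i.val), c ⟨k, hk.trans i.isLt⟩ ≤ a ⟨k, hk.trans i.isLt⟩ := by
      intro k hk
      have h1 : c ⟨k, hk.trans i.isLt⟩ ≤ ALT.orderEmbOfFin hALTcard ⟨k, hk⟩ :=
        emb_mono_subset hALTcard hB₁card hALTsubB₁ hk (hk.trans i.isLt)
      have h2 : ALT.orderEmbOfFin hALTcard ⟨k, hk⟩ = a ⟨k, hk.trans i.isLt⟩ := by
        rw [← hALTemb]; rfl
      exact h1.trans (le_of_eq h2)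
    -- c_i < a_i
    have hci : c ⟨i.val, i.isLt⟩ < a i := by
      apply emb_lt_of_count hB₁card i.isLt
      have hsub : insert x ALT ⊆ B₁f.filter (· < a i) := by
        intro y hy
        rcases mem_insert.1 hy with rfl | hy
        · exact mem_filter.2 ⟨hxB₁, hxlt⟩
        · exact mem_filter.2 ⟨hALTsubB₁ hy, hALTlt y hy⟩
      calc i.val + 1 = (insert x ALT).card := by rw [card_insert_of_notMem hxALT', hALTcard]
      _ ≤ _ := card_le_card hsub
    -- find least index of difference
    set S : Finset (Fin r) := Finset.univ.filter (fun j => c j ≠ a j) with hS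
    have hiS : i ∈ S := by
      rw [hS, mem_filter]
      refine ⟨mem_univ _, ?_⟩
      have : c i < a i := by
        have := hci
        rwa [show (⟨i.val, i.isLt⟩ : Fin r) = i from Fin.eta i i.isLt] at this
      exact ne_of_lt this
    have hSne : S.Nonempty := ⟨i, hiS⟩
    set j : Fin r := S.min' hSne with hj
    have hjS : j ∈ S := S.min'_mem hSne
    have hjne : c j ≠ a j := (mem_filter.1 hjS).2
    have hjlei : j ≤ i := S.min'_le i hiS
    have hjlt : c j < a j := by
      rcases lt_or_eq_of_le hjlei with hji | hji
      · exact lt_of_le_of_ne (hck j.val hji) hjne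
      · subst hji
        have := hci
        rwa [Fin.eta] at this
    have hkeq : ∀ k : Fin r, k < j → c k = a k := by
      intro k hk
      by_contra hne
      have : k ∈ S := mem_filter.2 ⟨mem_univ _, hne⟩
      exact absurd (S.min'_le k this) (not_le.2 hk)
    -- lex contradiction
    have hlenc : (B₁f.sort (· ≤ ·)).length = r := by rw [length_sort, hB₁card]
    have hlena : (A.sort (· ≤ ·)).length = r := by rw [length_sort, hAcard]
    have hlex : List.Lex (· < ·) (B₁f.sort (· ≤ ·)) (A.sort (· ≤ ·)) := by
      apply lex_of_getElem j.val _ _ (by rw [hlenc]; exact j.isLt) (by rw [hlena]; exact j.isLt)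
      · intro k hk
        have hkr : k < r := hk.trans j.isLt
        have h1 : (B₁f.sort (· ≤ ·))[k]'(by rw [hlenc]; exact hkr) = c ⟨k, hkr⟩ :=
          (orderEmbOfFin_apply B₁f hB₁card ⟨k, hkr⟩).symm
        have h2 : (A.sort (· ≤ ·))[k]'(by rw [hlena]; exact hkr) = a ⟨k, hkr⟩ :=
          (orderEmbOfFin_apply A hAcard ⟨k, hkr⟩).symm
        rw [h1, h2]
        exact hkeq ⟨k, hkr⟩ (by exact hk)
      · have h1 : (B₁f.sort (· ≤ ·))[j.val]'(by rw [hlenc]; exact j.isLt) = c j := by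
          rw [show c j = c ⟨j.val, j.isLt⟩ from by rw [Fin.eta]]
          exact (orderEmbOfFin_apply B₁f hB₁card ⟨j.val, j.isLt⟩).symm
        have h2 : (A.sort (· ≤ ·))[j.val]'(by rw [hlena]; exact j.isLt) = a j := by
          rw [show a j = a ⟨j.val, j.isLt⟩ from by rw [Fin.eta]]
          exact (orderEmbOfFin_apply A hAcard ⟨j.val, j.isLt⟩).symm
        rw [h1, h2]
        exact hjlt
    have hB₁mem : B₁f ∈ 𝓑 := by
      rw [h𝓑, mem_filter]
      exact ⟨mem_univ _, hB₁base'⟩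
    have hlt' : (B₁f.sort (· ≤ ·)) < (A.sort (· ≤ ·)) := hlex
    exact absurd (hmin B₁f hB₁mem) (not_le.2 hlt')
  refine ⟨A, ⟨hAbase, claim⟩, ?_⟩
  intro y ⟨hybase, hymin⟩
  obtain ⟨h1, h2, hf⟩ := hymin A hAbase
  obtain ⟨h3, h4, hg⟩ := claim y hybase
  have hfun : ∀ i : Fin r, y.orderEmbOfFin h1 i = A.orderEmbOfFin h2 i := by
    intro i
    have hf' := hf i
    have hg' := hg i
    rw [coe_orderIsoOfFin_apply, coe_orderIsoOfFin_apply] at hf' hg'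
    exact le_antisymm hf' (by
      have : A.orderEmbOfFin h3 i ≤ y.orderEmbOfFin h4 i := hg'
      convert this using 2)
  have : (↑y : Set α) = ↑A := by
    rw [← range_orderEmbOfFin y h1, ← range_orderEmbOfFin A h2]
    exact congrArg Set.range (funext hfun)
  exact_mod_cast this

end aux

lemma dual_orderEmbOfFin {α : Type*} [LinearOrder α] (s : Finset α) {r : ℕ}
    (h : s.card = r) (i : Fin r) :
    Finset.orderEmbOfFin (α := αᵒᵈ) s h i =
      OrderDual.toDual (s.orderEmbOfFin h i.rev) := by
  have key : (fun i : Fin r => OrderDual.toDual (s.orderEmbOfFin h i.rev)) =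
      Finset.orderEmbOfFin (α := αᵒᵈ) s h := by
    apply Finset.orderEmbOfFin_unique
    · intro x
      exact orderEmbOfFin_mem s h _
    · intro a b hab
      have hba : b.rev < a.rev := Fin.rev_lt_rev.2 hab
      exact (s.orderEmbOfFin h).strictMono hba
  exact (congrFun key i).symm

lemma galeLE_dual_iff {α : Type*} [LinearOrder α] (r : ℕ) (B B' : Finset α) :
    GaleLE (α := αᵒᵈ) r B B' ↔ GaleLE (α := α) r B' B := by
  constructor
  · rintro ⟨h, h', hle⟩
    refine ⟨h', h, fun i => ?_⟩
    have hrev := hle i.rev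
    erw [coe_orderIsoOfFin_apply, coe_orderIsoOfFin_apply] at hrev ⊢
    have h2 := (dual_orderEmbOfFin B h i.rev).symm.trans_le
      (hrev.trans_eq (dual_orderEmbOfFin B' h' i.rev))
    rw [Fin.rev_rev] at h2
    exact OrderDual.toDual_le_toDual.1 h2
  · rintro ⟨h', h, hle⟩
    refine ⟨h, h', fun i => ?_⟩
    exact (dual_orderEmbOfFin B h i).trans_le
      ((OrderDual.toDual_le_toDual.2 (hle i.rev)).trans_eq (dual_orderEmbOfFin B' h' i).symm)

/-- a matroid on a finite linearly ordered ground set whose bases all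
have size `r` has a unique Gale-minimum base and a unique Gale-maximum base. -/
theorem statement5 {α : Type*} [Fintype α] [LinearOrder α] (M : Matroid α) (r : ℕ)
    (hex : ∃ B, M.IsBase B) (hr : ∀ B, M.IsBase B → B.ncard = r) :
    (∃! B : Finset α, M.IsBase ↑B ∧ ∀ B' : Finset α, M.IsBase ↑B' → GaleLE r B B') ∧
    (∃! B : Finset α, M.IsBase ↑B ∧ ∀ B' : Finset α, M.IsBase ↑B' → GaleLE r B' B) := by
  constructor
  · exact gale_min M r hex hr
  · obtain ⟨A, ⟨hA1, hA2⟩, hA3⟩ := gale_min (α := αᵒᵈ) M r hex hr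
    refine ⟨A, ⟨hA1, fun B' hB' => (galeLE_dual_iff (α := α) r A B').1 (hA2 B' hB')⟩, ?_⟩
    intro y hy
    exact hA3 y ⟨hy.1, fun B' hB' => (galeLE_dual_iff (α := α) r y B').2 (hy.2 B' hB')⟩
end

section
/- Let W = (𝒫,[n]) be an admissible Wilson loop diagram, and let p = (i,j) ∈ 𝒫 with j ∉ {i−2, i−1, i, i+1, i+2} in ℤ/nℤ. Suppose that (i+1,j) ∉ 𝒫 and that every propagator of 𝒫 of the form (i,m) with m ≠ j has m not strictly inside the cyclic interval from i+1 to j that does not contain i (this encodes that x_{p,i} is a factor of R(V(𝒫)), i.e., p is the propagator incident to edge i farthest from vertex i). Then the Wilson loop diagram W' = ((𝒫 ∖ {p}) ∪ {(i+1,j)}, [n]) is admissible. -/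
section Aux
variable {n : ℕ} [NeZero n]

lemma dv_add (i a b : ZMod n) :
    (a - i).val + (b - a).val = (b - i).val ∨
    (a - i).val + (b - a).val = (b - i).val + n := by
  have h : (b - i) = (a - i) + (b - a) := by ring
  have h2 := ZMod.val_add (a - i) (b - a)
  rw [← h] at h2
  have hx := ZMod.val_lt (a - i)
  have hy := ZMod.val_lt (b - a)
  have hz := ZMod.val_lt (b - i)
  rcases Nat.lt_or_ge ((a - i).val + (b - a).val) n with hlt | hge
  · left; rw [Nat.mod_eq_of_lt hlt] at h2; omega
  · right
    rw [Nat.mod_eq_sub_mod hge, Nat.mod_eq_of_lt (by omega)] at h2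
    omega

lemma inside_iff (i a b c : ZMod n) :
    Inside a b c ↔ (((a-i).val < (b-i).val ∧ (b-i).val < (c-i).val) ∨
      ((c-i).val < (a-i).val ∧ (a-i).val < (b-i).val) ∨
      ((b-i).val < (c-i).val ∧ (c-i).val < (a-i).val)) := by
  have h1 := dv_add i a b
  have h2 := dv_add i a c
  have l1 := ZMod.val_lt (a - i)
  have l2 := ZMod.val_lt (b - i)
  have l3 := ZMod.val_lt (c - i)
  have l4 := ZMod.val_lt (b - a)
  have l5 := ZMod.val_lt (c - a)
  unfold Inside
  omega

lemma c_inj {i x y : ZMod n} (h : (x - i).val = (y - i).val) : x = y := by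
  have := ZMod.val_injective n h
  exact sub_left_injective this

lemma c_succ (hn : 1 < n) {i x : ZMod n} (h : (x - i).val ≠ n - 1) :
    (x + 1 - i).val = (x - i).val + 1 := by
  have h1 : x + 1 - i = (x - i) + 1 := by ring
  have hone : (1 : ZMod n).val = 1 := ZMod.val_one'' (by omega)
  have hlt := ZMod.val_lt (x - i)
  rw [h1, ZMod.val_add, hone, Nat.mod_eq_of_lt (by omega)]

set_option linter.unusedSectionVars false in
lemma mem_multiSupp {x : ZMod n} {M : Multiset (ZMod n × ZMod n)} :
    x ∈ multiSupp M ↔ ∃ q ∈ M, x ∈ propSupp q := by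
  induction M using Multiset.induction with
  | empty => simp [multiSupp]
  | cons a s ih =>
      simp only [multiSupp, Multiset.map_cons, Multiset.sup_cons] at *
      simp [Finset.mem_union, ih]

lemma card_union_ge {α : Type*} [DecidableEq α] (X Y : Finset α) (a b : α)
    (hsub : X ∩ Y ⊆ {a, b}) : X.card + Y.card ≤ (X ∪ Y).card + 2 := by
  have h := Finset.card_union_add_card_inter X Y
  have h2 : (X ∩ Y).card ≤ 2 := by
    refine le_trans (Finset.card_le_card hsub) ?_
    exact le_trans (Finset.card_insert_le _ _) (by simp)
  omega

lemma supp_bound (hn : 1 < n) (i : ZMod n) (q : ZMod n × ZMod n) (lo hi : ℕ)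
    (h1 : lo ≤ (q.1 - i).val) (h2 : (q.1 - i).val ≤ hi)
    (h3 : lo ≤ (q.2 - i).val) (h4 : (q.2 - i).val ≤ hi)
    (hhi : hi ≤ n - 2) :
    ∀ x ∈ propSupp q, lo ≤ (x - i).val ∧ (x - i).val ≤ hi + 1 := by
  intro x hx
  simp only [propSupp, Finset.mem_insert, Finset.mem_singleton] at hx
  have e1 : (q.1 + 1 - i).val = (q.1 - i).val + 1 := c_succ hn (by omega)
  have e2 : (q.2 + 1 - i).val = (q.2 - i).val + 1 := c_succ hn (by omega)
  rcases hx with h|h|h|h <;> subst h <;> omega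

set_option linter.unusedSectionVars false in
lemma multiSupp_filter_union (pred : ZMod n × ZMod n → Prop) [DecidablePred pred]
    (Q : Multiset (ZMod n × ZMod n)) :
    multiSupp Q = multiSupp (Q.filter pred) ∪ multiSupp (Q.filter (fun q => ¬ pred q)) := by
  ext x
  simp only [Finset.mem_union, mem_multiSupp, Multiset.mem_filter]
  constructor
  · rintro ⟨q, hq, hx⟩
    by_cases h : pred q
    · exact Or.inl ⟨q, ⟨hq, h⟩, hx⟩
    · exact Or.inr ⟨q, ⟨hq, h⟩, hx⟩
  · rintro (⟨q, ⟨hq, _⟩, hx⟩ | ⟨q, ⟨hq, _⟩, hx⟩) <;> exact ⟨q, hq, hx⟩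

set_option linter.unusedSectionVars false in
lemma card4 (i x1 x2 x3 x4 : ZMod n)
    (h12 : (x1-i).val ≠ (x2-i).val) (h13 : (x1-i).val ≠ (x3-i).val)
    (h14 : (x1-i).val ≠ (x4-i).val) (h23 : (x2-i).val ≠ (x3-i).val)
    (h24 : (x2-i).val ≠ (x4-i).val) (h34 : (x3-i).val ≠ (x4-i).val) :
    ({x1, x2, x3, x4} : Finset (ZMod n)).card = 4 := by
  have n12 : x1 ≠ x2 := fun h => h12 (by rw [h])
  have n13 : x1 ≠ x3 := fun h => h13 (by rw [h])
  have n14 : x1 ≠ x4 := fun h => h14 (by rw [h])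
  have n23 : x2 ≠ x3 := fun h => h23 (by rw [h])
  have n24 : x2 ≠ x4 := fun h => h24 (by rw [h])
  have n34 : x3 ≠ x4 := fun h => h34 (by rw [h])
  rw [Finset.card_insert_of_notMem (by simp [n12, n13, n14]),
      Finset.card_insert_of_notMem (by simp [n23, n24]),
      Finset.card_insert_of_notMem (by simp [n34]), Finset.card_singleton]

end Aux

set_option maxHeartbeats 4000000

/-- let `(Ps,[n])` be an admissible Wilson loop diagram and
`p = (i,j) ∈ Ps` with `j ∉ {i−2, i−1, i, i+1, i+2}`.  If `(i+1,j) ∉ Ps` and no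
propagator `(i,m)` with `m ≠ j` has `m` strictly inside the cyclic interval from
`i+1` to `j` not containing `i` (so `x_{p,i}` is a factor of `R(V(Ps))`), then the
diagram obtained by replacing `p` with `(i+1,j)` is admissible. -/
theorem statement13 (n : ℕ) (Ps : Multiset (ZMod n × ZMod n))
    (hW : Admissible n Ps) (i j : ZMod n) (hp : (i, j) ∈ Ps)
    (h1 : j ≠ i - 2) (h2 : j ≠ i - 1) (h3 : j ≠ i) (h4 : j ≠ i + 1) (h5 : j ≠ i + 2)
    (hq : (i + 1, j) ∉ Ps ∧ (j, i + 1) ∉ Ps)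
    (hfar : ∀ m : ZMod n, ((i, m) ∈ Ps ∨ (m, i) ∈ Ps) → m ≠ j →
      ¬ Inside (i + 1) m j) :
    Admissible n ((i + 1, j) ::ₘ Ps.erase (i, j)) := by
  obtain ⟨hNC, hDen, hGl⟩ := hW
  have hcardPs : 1 ≤ Multiset.card Ps := by
    rw [← Multiset.cons_erase hp, Multiset.card_cons]; omega
  have hn5 : 5 ≤ n := by omega
  haveI : NeZero n := ⟨by omega⟩
  -- basic coordinate facts
  have hci : (i - i).val = 0 := by simp
  have hci1 : (i + 1 - i).val = 1 := by
    have h : i + 1 - i = 1 := by ring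
    rw [h, ZMod.val_one'' (by omega)]
  have hone_ne : (1 : ZMod n) ≠ 0 := by
    intro h
    have := congrArg ZMod.val h
    rw [ZMod.val_one'' (by omega), ZMod.val_zero] at this
    omega
  have htwo : ((2 : ZMod n)).val = 2 := by
    have h : (2 : ZMod n) = ((2 : ℕ) : ZMod n) := by push_cast; ring
    rw [h, ZMod.val_natCast, Nat.mod_eq_of_lt (by omega)]
  have htwo_ne : (2 : ZMod n) ≠ 0 := by
    intro h
    have h' := htwo
    rw [h, ZMod.val_zero] at h'
    omega
  have hci2 : (i + 2 - i).val = 2 := by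
    have h : i + 2 - i = 2 := by ring
    rw [h, htwo]
  have hci2' : (i + 1 + 1 - i).val = 2 := by
    have h : i + 1 + 1 - i = 2 := by ring
    rw [h, htwo]
  have hvm1 : (i - 1 - i).val = n - 1 := by
    have h : i - 1 - i = -1 := by ring
    rw [h, ZMod.neg_val, if_neg hone_ne, ZMod.val_one'' (by omega)]
  have hvm2 : (i - 2 - i).val = n - 2 := by
    have h : i - 2 - i = -2 := by ring
    rw [h, ZMod.neg_val, if_neg htwo_ne, htwo]
  have hdlt : (j - i).val < n := ZMod.val_lt _
  have hd0 : (j - i).val ≠ 0 := fun h => h3 (c_inj (by rw [h, hci]))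
  have hd1 : (j - i).val ≠ 1 := fun h => h4 (c_inj (by rw [h, hci1]))
  have hd2 : (j - i).val ≠ 2 := fun h => h5 (c_inj (by rw [h, hci2]))
  have hdn1 : (j - i).val ≠ n - 1 := fun h => h2 (c_inj (by rw [h, hvm1]))
  have hdn2 : (j - i).val ≠ n - 2 := fun h => h1 (c_inj (by rw [h, hvm2]))
  have hdlo : 3 ≤ (j - i).val := by omega
  have hdhi : (j - i).val ≤ n - 3 := by omega
  have hcj1 : (j + 1 - i).val = (j - i).val + 1 := c_succ (by omega) (by omega)
  have cne : ∀ {x y : ZMod n}, (x - i).val ≠ (y - i).val → x ≠ y :=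
    fun h hxy => h (by rw [hxy])
  -- specialized Inside characterizations
  have I1 : ∀ x : ZMod n, Inside i x j ↔
      (0 < (x - i).val ∧ (x - i).val < (j - i).val) := by
    intro x
    rw [inside_iff i]
    have := ZMod.val_lt (x - i)
    omega
  have I2 : ∀ x : ZMod n, Inside j x i ↔ (j - i).val < (x - i).val := by
    intro x
    rw [inside_iff i]
    have := ZMod.val_lt (x - i)
    omega
  have I3 : ∀ x : ZMod n, Inside (i + 1) x j ↔
      (1 < (x - i).val ∧ (x - i).val < (j - i).val) := by
    intro x
    rw [inside_iff i]
    have := ZMod.val_lt (x - i)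
    omega
  have I4 : ∀ x : ZMod n, Inside j x (i + 1) ↔
      ((j - i).val < (x - i).val ∨ (x - i).val = 0) := by
    intro x
    rw [inside_iff i]
    have := ZMod.val_lt (x - i)
    omega
  -- the key non-crossing fact
  have keyNC : ∀ q ∈ Ps, ¬ Cross (i + 1, j) q ∧ ¬ Cross q (i + 1, j) := by
    intro q hqm
    have hpq := hNC (i, j) hp q hqm
    have hf1 : (q.1 - i).val = 0 → (q.2 - i).val = (j - i).val ∨ ¬ Inside (i + 1) q.2 j := by
      intro h
      have hq1 : q.1 = i := c_inj (by rw [h, hci])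
      by_cases hj : q.2 = j
      · left; rw [hj]
      · right
        refine hfar q.2 (Or.inl ?_) hj
        rw [← hq1]
        simpa using hqm
    have hf2 : (q.2 - i).val = 0 → (q.1 - i).val = (j - i).val ∨ ¬ Inside (i + 1) q.1 j := by
      intro h
      have hq2 : q.2 = i := c_inj (by rw [h, hci])
      by_cases hj : q.1 = j
      · left; rw [hj]
      · right
        refine hfar q.1 (Or.inr ?_) hj
        rw [← hq2]
        simpa using hqm
    have ha := ZMod.val_lt (q.1 - i)
    have hb := ZMod.val_lt (q.2 - i)
    simp only [Cross, I1, I2, I3, I4] at hpq hf1 hf2 ⊢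
    constructor
    · omega
    · intro hcr
      simp only [inside_iff i] at hcr
      omega
  refine ⟨?_, ?_, ?_⟩
  · -- non-crossing
    intro p1 hp1 p2 hp2
    rcases Multiset.mem_cons.mp hp1 with rfl | hm1 <;> rcases Multiset.mem_cons.mp hp2 with rfl | hm2
    · simp only [Cross, I3, I4]
      omega
    · exact (keyNC p2 (Multiset.mem_of_mem_erase hm2)).1
    · exact (keyNC p1 (Multiset.mem_of_mem_erase hm1)).2
    · exact hNC p1 (Multiset.mem_of_mem_erase hm1) p2 (Multiset.mem_of_mem_erase hm2)
  · -- local density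
    intro P hP hPne
    by_cases hmem : (i + 1, j) ∈ P
    · -- the new propagator lies in P
      set Q := P.erase (i + 1, j) with hQdef
      have hPQ : P = (i + 1, j) ::ₘ Q := (Multiset.cons_erase hmem).symm
      have hQE : Q ≤ Ps.erase (i, j) := by
        have h := Multiset.erase_le_erase (i + 1, j) hP
        rwa [Multiset.erase_cons_head] at h
      have hQPs : Q ≤ Ps := le_trans hQE (Multiset.erase_le _ _)
      have hcardP : Multiset.card P = Multiset.card Q + 1 := by
        rw [hPQ, Multiset.card_cons]
      have hsupP : multiSupp P = propSupp (i + 1, j) ∪ multiSupp Q := by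
        rw [hPQ]
        simp [multiSupp, Multiset.sup_cons, Finset.sup_eq_union]
      have hpse : propSupp ((i + 1 : ZMod n), j) = {i + 1, i + 1 + 1, j, j + 1} := rfl
      have hc4 : (propSupp ((i + 1 : ZMod n), j)).card = 4 := by
        rw [hpse]
        exact card4 i _ _ _ _ (by omega) (by omega) (by omega) (by omega) (by omega)
          (by omega)
      by_cases hQ0 : Q = 0
      · -- singleton case
        have h0 : multiSupp (0 : Multiset (ZMod n × ZMod n)) = ∅ := rfl
        rw [hsupP, hQ0, h0, Finset.union_empty, hc4, hcardP, hQ0]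
        simp
      · -- Q nonempty
        by_cases himem : i ∈ multiSupp Q
        · -- old case: i still in the support
          have hconsle : (i, j) ::ₘ Q ≤ Ps := by
            rw [Multiset.le_iff_count]
            intro x
            by_cases hx : x = (i, j)
            · subst hx
              rw [Multiset.count_cons_self]
              have hc1 := Multiset.le_iff_count.mp hQE (i, j)
              rw [Multiset.count_erase_self] at hc1
              have hc2 : 0 < Multiset.count (i, j) Ps := Multiset.count_pos.mpr hp
              omega
            · rw [Multiset.count_cons_of_ne hx]
              exact Multiset.le_iff_count.mp hQPs x
          have hDQ := hDen ((i, j) ::ₘ Q) hconsle (Multiset.cons_ne_zero)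
          have hsub : multiSupp ((i, j) ::ₘ Q) ⊆ multiSupp P := by
            intro x hx
            rcases mem_multiSupp.mp hx with ⟨r, hr, hxr⟩
            rcases Multiset.mem_cons.mp hr with rfl | hrQ
            · simp only [propSupp, Finset.mem_insert, Finset.mem_singleton] at hxr
              rcases hxr with h' | h' | h' | h'
              · rcases mem_multiSupp.mp himem with ⟨r', hr', hxr'⟩
                exact mem_multiSupp.mpr ⟨r', by rw [hPQ]; exact Multiset.mem_cons_of_mem hr',
                  by rw [h']; exact hxr'⟩
              · exact mem_multiSupp.mpr ⟨(i + 1, j), by rw [hPQ]; exact Multiset.mem_cons_self _ _,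
                  by rw [h']; simp [propSupp]⟩
              · exact mem_multiSupp.mpr ⟨(i + 1, j), by rw [hPQ]; exact Multiset.mem_cons_self _ _,
                  by rw [h']; simp [propSupp]⟩
              · exact mem_multiSupp.mpr ⟨(i + 1, j), by rw [hPQ]; exact Multiset.mem_cons_self _ _,
                  by rw [h']; simp [propSupp]⟩
            · exact mem_multiSupp.mpr ⟨r, by rw [hPQ]; exact Multiset.mem_cons_of_mem hrQ, hxr⟩
          have hle := Finset.card_le_card hsub
          rw [Multiset.card_cons] at hDQ
          omega
        · -- i is no longer in the support of Q
          have hC1 : ∀ q ∈ Q, 1 ≤ (q.1 - i).val ∧ (q.1 - i).val ≤ n - 2 ∧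
              1 ≤ (q.2 - i).val ∧ (q.2 - i).val ≤ n - 2 := by
            intro q hqm
            have hni : i ∉ propSupp q := fun h => himem (mem_multiSupp.mpr ⟨q, hqm, h⟩)
            simp only [propSupp, Finset.mem_insert, Finset.mem_singleton, not_or] at hni
            obtain ⟨n1, n2, n3, n4⟩ := hni
            have b1 := ZMod.val_lt (q.1 - i)
            have b2 := ZMod.val_lt (q.2 - i)
            have e1 : (q.1 - i).val ≠ 0 := fun h => n1 (c_inj (by rw [hci, h]))
            have e3 : (q.2 - i).val ≠ 0 := fun h => n3 (c_inj (by rw [hci, h]))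
            have e2 : (q.1 - i).val ≠ n - 1 := by
              intro h
              have hq1 : q.1 = i - 1 := c_inj (by rw [h, hvm1])
              apply n2
              rw [hq1]
              ring
            have e4 : (q.2 - i).val ≠ n - 1 := by
              intro h
              have hq2 : q.2 = i - 1 := c_inj (by rw [h, hvm1])
              apply n4
              rw [hq2]
              ring
            omega
          have hC2 : ∀ q ∈ Q, ((q.1 - i).val ≤ (j - i).val ∧ (q.2 - i).val ≤ (j - i).val) ∨
              ((j - i).val ≤ (q.1 - i).val ∧ (j - i).val ≤ (q.2 - i).val) := by
            intro q hqm
            have hpq := hNC (i, j) hp q (Multiset.mem_of_le hQPs hqm)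
            have hb := hC1 q hqm
            simp only [Cross, I1, I2] at hpq
            omega
          -- split into propagators inside [i+1,j] and outside
          set Qin := Q.filter (fun q => (q.1 - i).val ≤ (j - i).val ∧ (q.2 - i).val ≤ (j - i).val) with hQin
          set Qout := Q.filter (fun q => ¬((q.1 - i).val ≤ (j - i).val ∧ (q.2 - i).val ≤ (j - i).val)) with hQout
          have hsupQ : multiSupp Q = multiSupp Qin ∪ multiSupp Qout :=
            multiSupp_filter_union _ Q
          have hcardQ : Multiset.card Qin + Multiset.card Qout = Multiset.card Q := by
            have h := congrArg Multiset.card (Multiset.filter_add_not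
              (fun q => (q.1 - i).val ≤ (j - i).val ∧ (q.2 - i).val ≤ (j - i).val) Q)
            rwa [Multiset.card_add] at h
          have hVin : ∀ x ∈ multiSupp Qin, 1 ≤ (x - i).val ∧ (x - i).val ≤ (j - i).val + 1 := by
            intro x hx
            rcases mem_multiSupp.mp hx with ⟨q, hqm, hxq⟩
            obtain ⟨hqQ, hpred⟩ := Multiset.mem_filter.mp hqm
            have hb := hC1 q hqQ
            exact supp_bound (by omega) i q 1 ((j - i).val) (by omega) (by omega) (by omega)
              (by omega) (by omega) x hxq
          have hVout : ∀ x ∈ multiSupp Qout, (j - i).val ≤ (x - i).val ∧ (x - i).val ≤ n - 1 := by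
            intro x hx
            rcases mem_multiSupp.mp hx with ⟨q, hqm, hxq⟩
            obtain ⟨hqQ, hpred⟩ := Multiset.mem_filter.mp hqm
            have hb := hC1 q hqQ
            have hc2 := hC2 q hqQ
            have := supp_bound (by omega) i q ((j - i).val) (n - 2) (by omega) (by omega)
              (by omega) (by omega) (by omega) x hxq
            omega
          by_cases hQout0 : Qout = 0
          · -- all propagators inside [i+1, j]
            have hQinQ : Qin = Q := by
              have h : Qin + Qout = Q := Multiset.filter_add_not
                (fun q => (q.1 - i).val ≤ (j - i).val ∧ (q.2 - i).val ≤ (j - i).val) Q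
              rw [hQout0, add_zero] at h
              exact h
            have hin : ∀ q ∈ Q, (q.1 - i).val ≤ (j - i).val ∧ (q.2 - i).val ≤ (j - i).val := by
              intro q hqm
              exact (Multiset.mem_filter.mp (by rw [hQinQ]; exact hqm : q ∈ Qin)).2
            by_cases hE1 : ∃ q ∈ Q, q.1 = i + 1 ∨ q.2 = i + 1
            · by_cases hEj : ∃ q ∈ Q, q.1 = j ∨ q.2 = j
              · -- hard case: split at the farthest propagator from i+1
                obtain ⟨q1, hq1Q, hq1j⟩ := hEj
                set M := Q.filter (fun q => q.1 = i + 1 ∨ q.2 = i + 1) with hM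
                set N := M.map (fun q => if q.1 = i + 1 then (q.2 - i).val else (q.1 - i).val) with hN
                have hNne : N.toFinset.Nonempty := by
                  rw [Multiset.toFinset_nonempty]
                  obtain ⟨q0, h0, h0e⟩ := hE1
                  have : q0 ∈ M := Multiset.mem_filter.mpr ⟨h0, h0e⟩
                  intro hcon
                  rw [hN, Multiset.map_eq_zero] at hcon
                  rw [hcon] at this
                  exact Multiset.notMem_zero _ this
                obtain ⟨mv, hmvN, hmvmax⟩ : ∃ mv, mv ∈ N ∧ ∀ v ∈ N, v ≤ mv :=
                  ⟨N.toFinset.max' hNne, Multiset.mem_toFinset.mp (N.toFinset.max'_mem hNne),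
                    fun v hv => N.toFinset.le_max' v (Multiset.mem_toFinset.mpr hv)⟩
                obtain ⟨q0, hq0M, hq0v⟩ := Multiset.mem_map.mp hmvN
                obtain ⟨hq0Q, hq0e⟩ := Multiset.mem_filter.mp hq0M
                obtain ⟨w0, hq0form, hcw0⟩ : ∃ w0, (q0 = (i + 1, w0) ∨ q0 = (w0, i + 1)) ∧
                    (w0 - i).val = mv := by
                  by_cases h : q0.1 = i + 1
                  · rw [if_pos h] at hq0v
                    exact ⟨q0.2, Or.inl (Prod.ext h rfl), hq0v⟩
                  · rw [if_neg h] at hq0v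
                    rcases hq0e with h'|h'
                    · exact absurd h' h
                    · exact ⟨q0.1, Or.inr (Prod.ext rfl h'), hq0v⟩
                have hq0vals : ((q0.1 - i).val = 1 ∧ (q0.2 - i).val = mv) ∨
                    ((q0.1 - i).val = mv ∧ (q0.2 - i).val = 1) := by
                  rcases hq0form with hf|hf
                  · left
                    rw [hf]
                    exact ⟨hci1, hcw0⟩
                  · right
                    rw [hf]
                    exact ⟨hcw0, hci1⟩
                have hmv1 : 1 ≤ mv := by
                  have := hC1 q0 hq0Q
                  omega
                have hmvled : mv ≤ (j - i).val := by
                  have := hin q0 hq0Q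
                  omega
                have hmvd : mv ≠ (j - i).val := by
                  intro h
                  have hwj : w0 = j := c_inj (by rw [hcw0, h])
                  rcases hq0form with hf|hf
                  · apply hq.1
                    rw [← hwj, ← hf]
                    exact Multiset.mem_of_le hQPs hq0Q
                  · apply hq.2
                    rw [← hwj, ← hf]
                    exact Multiset.mem_of_le hQPs hq0Q
                have hmax : ∀ q ∈ Q, ((q.1 - i).val = 1 → (q.2 - i).val ≤ mv) ∧
                    ((q.2 - i).val = 1 → (q.1 - i).val ≤ mv) := by
                  intro q hqm
                  constructor
                  · intro h
                    have hq1 : q.1 = i + 1 := c_inj (by rw [h, hci1])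
                    have hqM : q ∈ M := Multiset.mem_filter.mpr ⟨hqm, Or.inl hq1⟩
                    exact hmvmax _ (Multiset.mem_map.mpr ⟨q, hqM, by rw [if_pos hq1]⟩)
                  · intro h
                    have hq2 : q.2 = i + 1 := c_inj (by rw [h, hci1])
                    by_cases h1 : q.1 = i + 1
                    · rw [h1, hci1]; exact hmv1
                    · have hqM : q ∈ M := Multiset.mem_filter.mpr ⟨hqm, Or.inr hq2⟩
                      exact hmvmax _ (Multiset.mem_map.mpr ⟨q, hqM, by rw [if_neg h1]⟩)
                -- split Q at mv
                set A := Q.filter (fun q => (q.1 - i).val ≤ mv ∧ (q.2 - i).val ≤ mv) with hA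
                set B := Q.filter (fun q => ¬((q.1 - i).val ≤ mv ∧ (q.2 - i).val ≤ mv)) with hB
                have hsupAB : multiSupp Q = multiSupp A ∪ multiSupp B :=
                  multiSupp_filter_union _ Q
                have hcardAB : Multiset.card A + Multiset.card B = Multiset.card Q := by
                  have h := congrArg Multiset.card (Multiset.filter_add_not
                    (fun q => (q.1 - i).val ≤ mv ∧ (q.2 - i).val ≤ mv) Q)
                  rwa [Multiset.card_add] at h
                have hq0A : q0 ∈ A := by
                  refine Multiset.mem_filter.mpr ⟨hq0Q, ?_⟩
                  omega
                have hAne : A ≠ 0 := fun h => by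
                  rw [h] at hq0A
                  exact Multiset.notMem_zero _ hq0A
                have hq1B : q1 ∈ B := by
                  refine Multiset.mem_filter.mpr ⟨hq1Q, ?_⟩
                  rcases hq1j with h|h
                  · have : (q1.1 - i).val = (j - i).val := by rw [h]
                    omega
                  · have : (q1.2 - i).val = (j - i).val := by rw [h]
                    omega
                have hBne : B ≠ 0 := fun h => by
                  rw [h] at hq1B
                  exact Multiset.notMem_zero _ hq1B
                have Hsmall : ∀ x : ZMod n, 2 ≤ (x - i).val → (x - i).val < mv →
                    Inside (i + 1) x w0 := by
                  intro x hx1 hx2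
                  rw [inside_iff i]
                  omega
                have Hbig : ∀ x : ZMod n, mv < (x - i).val → (x - i).val ≤ (j - i).val →
                    2 ≤ mv → Inside w0 x (i + 1) := by
                  intro x hx1 hx2 hx3
                  rw [inside_iff i]
                  omega
                have hBlo : ∀ q ∈ B, mv ≤ (q.1 - i).val ∧ mv ≤ (q.2 - i).val := by
                  intro q hqm
                  obtain ⟨hqQ, hnp⟩ := Multiset.mem_filter.mp hqm
                  have hcr1 := hNC q0 (Multiset.mem_of_le hQPs hq0Q) q (Multiset.mem_of_le hQPs hqQ)
                  have hb := hC1 q hqQ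
                  have hb2 := hin q hqQ
                  have hm := hmax q hqQ
                  have hnp' : ¬((q.1 - i).val ≤ mv ∧ (q.2 - i).val ≤ mv) := hnp
                  constructor
                  · by_contra hcon
                    push_neg at hcon
                    have hq2big : mv < (q.2 - i).val := by omega
                    have hq1small : 2 ≤ (q.1 - i).val ∧ (q.1 - i).val < mv := by
                      rcases Nat.lt_or_ge (q.1 - i).val 2 with h'|h'
                      · exfalso
                        have : (q.1 - i).val = 1 := by omega
                        have := hm.1 this
                        omega
                      · exact ⟨h', hcon⟩
                    apply hcr1
                    rcases hq0form with hf|hf <;> rw [hf]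
                    · exact Or.inl ⟨Hsmall q.1 hq1small.1 hq1small.2,
                        Hbig q.2 hq2big (by omega) (by omega)⟩
                    · exact Or.inr ⟨Hbig q.2 hq2big (by omega) (by omega),
                        Hsmall q.1 hq1small.1 hq1small.2⟩
                  · by_contra hcon
                    push_neg at hcon
                    have hq1big : mv < (q.1 - i).val := by omega
                    have hq2small : 2 ≤ (q.2 - i).val ∧ (q.2 - i).val < mv := by
                      rcases Nat.lt_or_ge (q.2 - i).val 2 with h'|h'
                      · exfalso
                        have : (q.2 - i).val = 1 := by omega
                        have := hm.2 this
                        omega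
                      · exact ⟨h', hcon⟩
                    apply hcr1
                    rcases hq0form with hf|hf <;> rw [hf]
                    · exact Or.inr ⟨Hsmall q.2 hq2small.1 hq2small.2,
                        Hbig q.1 hq1big (by omega) (by omega)⟩
                    · exact Or.inl ⟨Hbig q.1 hq1big (by omega) (by omega),
                        Hsmall q.2 hq2small.1 hq2small.2⟩
                have hVA : ∀ x ∈ multiSupp A, 1 ≤ (x - i).val ∧ (x - i).val ≤ mv + 1 := by
                  intro x hx
                  rcases mem_multiSupp.mp hx with ⟨q, hqm, hxq⟩
                  obtain ⟨hqQ, hpred⟩ := Multiset.mem_filter.mp hqm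
                  have hb := hC1 q hqQ
                  exact supp_bound (by omega) i q 1 mv (by omega) (by omega) (by omega)
                    (by omega) (by omega) x hxq
                have hVB : ∀ x ∈ multiSupp B, mv ≤ (x - i).val ∧ (x - i).val ≤ (j - i).val + 1 := by
                  intro x hx
                  rcases mem_multiSupp.mp hx with ⟨q, hqm, hxq⟩
                  have hqB := hqm
                  obtain ⟨hqQ, hpred⟩ := Multiset.mem_filter.mp hqm
                  have hb := hin q hqQ
                  have hlo := hBlo q hqB
                  exact supp_bound (by omega) i q mv ((j - i).val) (by omega) (by omega)
                    (by omega) (by omega) (by omega) x hxq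
                have hcw01 : (w0 + 1 - i).val = mv + 1 := by
                  rw [← hcw0]
                  exact c_succ (by omega) (by rw [hcw0]; omega)
                have hinter : multiSupp A ∩ multiSupp B ⊆ {w0, w0 + 1} := by
                  intro x hx
                  rw [Finset.mem_inter] at hx
                  have ha' := hVA x hx.1
                  have hb' := hVB x hx.2
                  have : (x - i).val = mv ∨ (x - i).val = mv + 1 := by omega
                  simp only [Finset.mem_insert, Finset.mem_singleton]
                  rcases this with h|h
                  · exact Or.inl (c_inj (by rw [h, hcw0]))
                  · exact Or.inr (c_inj (by rw [h, hcw01]))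
                have hdenA := hDen A (le_trans (Multiset.filter_le _ _) hQPs) hAne
                have hdenB := hDen B (le_trans (Multiset.filter_le _ _) hQPs) hBne
                have hUn := card_union_ge (multiSupp A) (multiSupp B) w0 (w0 + 1) hinter
                have hsubQ : (multiSupp Q).card ≤ (multiSupp P).card := by
                  apply Finset.card_le_card
                  rw [hsupP]
                  exact Finset.subset_union_right
                have heq : (multiSupp A ∪ multiSupp B).card = (multiSupp Q).card := by
                  rw [← hsupAB]
                omega
              · -- no propagator touches j : j+1 is free
                push_neg at hEj
                have hj1 : j + 1 ∉ multiSupp Q := by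
                  intro h
                  rcases mem_multiSupp.mp h with ⟨q, hqm, hxq⟩
                  simp only [propSupp, Finset.mem_insert, Finset.mem_singleton] at hxq
                  have hb := hC1 q hqm
                  have hb2 := hin q hqm
                  rcases hxq with h'|h'|h'|h'
                  · have : (q.1 - i).val = (j - i).val + 1 := by rw [← h', hcj1]
                    omega
                  · have hq1 : q.1 = j := by
                      have := add_right_cancel (a := j) (b := (1 : ZMod n)) (c := q.1) h'
                      exact this.symm
                    exact (hEj q hqm).1 hq1
                  · have : (q.2 - i).val = (j - i).val + 1 := by rw [← h', hcj1]
                    omega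
                  · have hq2 : q.2 = j := by
                      have := add_right_cancel (a := j) (b := (1 : ZMod n)) (c := q.2) h'
                      exact this.symm
                    exact (hEj q hqm).2 hq2
                have hset : multiSupp P = insert (j + 1) ({i + 1, i + 1 + 1, j} ∪ multiSupp Q) := by
                  rw [hsupP, hpse]
                  ext x
                  simp only [Finset.mem_union, Finset.mem_insert, Finset.mem_singleton]
                  tauto
                have hnm : j + 1 ∉ ({i + 1, i + 1 + 1, j} : Finset (ZMod n)) ∪ multiSupp Q := by
                  intro hmem'
                  rcases Finset.mem_union.mp hmem' with h'|h'
                  · simp only [Finset.mem_insert, Finset.mem_singleton] at h'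
                    rcases h' with h'|h'|h' <;>
                    · have hv := congrArg (fun z : ZMod n => (z - i).val) h'
                      omega
                  · exact hj1 h'
                have hsub2 : (multiSupp Q).card ≤ (({i + 1, i + 1 + 1, j} : Finset (ZMod n)) ∪ multiSupp Q).card :=
                  Finset.card_le_card Finset.subset_union_right
                have hdenQ := hDen Q hQPs hQ0
                rw [hset, Finset.card_insert_of_notMem hnm]
                omega
            · -- no propagator touches i+1 : i+1 is free
              push_neg at hE1
              have hi1 : i + 1 ∉ multiSupp Q := by
                intro h
                rcases mem_multiSupp.mp h with ⟨q, hqm, hxq⟩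
                simp only [propSupp, Finset.mem_insert, Finset.mem_singleton] at hxq
                have hb := hC1 q hqm
                rcases hxq with h'|h'|h'|h'
                · exact (hE1 q hqm).1 h'.symm
                · have hq1 : q.1 = i := by
                    have := add_right_cancel (a := i) (b := (1 : ZMod n)) (c := q.1) h'
                    exact this.symm
                  have : (q.1 - i).val = 0 := by rw [hq1, hci]
                  omega
                · exact (hE1 q hqm).2 h'.symm
                · have hq2 : q.2 = i := by
                    have := add_right_cancel (a := i) (b := (1 : ZMod n)) (c := q.2) h'
                    exact this.symm
                  have : (q.2 - i).val = 0 := by rw [hq2, hci]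
                  omega
              have hset : multiSupp P = insert (i + 1) ({i + 1 + 1, j, j + 1} ∪ multiSupp Q) := by
                rw [hsupP, hpse]
                ext x
                simp only [Finset.mem_union, Finset.mem_insert, Finset.mem_singleton]
                tauto
              have hnm : i + 1 ∉ ({i + 1 + 1, j, j + 1} : Finset (ZMod n)) ∪ multiSupp Q := by
                intro hmem'
                rcases Finset.mem_union.mp hmem' with h'|h'
                · simp only [Finset.mem_insert, Finset.mem_singleton] at h'
                  rcases h' with h'|h'|h' <;>
                  · have hv := congrArg (fun z : ZMod n => (z - i).val) h'
                    omega
                · exact hi1 h'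
              have hsub2 : (multiSupp Q).card ≤ (({i + 1 + 1, j, j + 1} : Finset (ZMod n)) ∪ multiSupp Q).card :=
                Finset.card_le_card Finset.subset_union_right
              have hdenQ := hDen Q hQPs hQ0
              rw [hset, Finset.card_insert_of_notMem hnm]
              omega
          · -- some propagator lies outside [i+1, j]
            have hdenOut := hDen Qout (le_trans (Multiset.filter_le _ _) hQPs) hQout0
            have hXP : multiSupp P = (propSupp (i + 1, j) ∪ multiSupp Qin) ∪ multiSupp Qout := by
              rw [hsupP, hsupQ, ← Finset.union_assoc]
            have hXbound : ∀ x ∈ propSupp ((i + 1 : ZMod n), j) ∪ multiSupp Qin,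
                1 ≤ (x - i).val ∧ (x - i).val ≤ (j - i).val + 1 := by
              intro x hx
              rcases Finset.mem_union.mp hx with h|h
              · rw [hpse] at h
                simp only [Finset.mem_insert, Finset.mem_singleton] at h
                rcases h with rfl|rfl|rfl|rfl <;> omega
              · exact hVin x h
            have hinter : (propSupp (i + 1, j) ∪ multiSupp Qin) ∩ multiSupp Qout ⊆ {j, j + 1} := by
              intro x hx
              rw [Finset.mem_inter] at hx
              have h1' := hXbound x hx.1
              have h2' := hVout x hx.2
              have : (x - i).val = (j - i).val ∨ (x - i).val = (j - i).val + 1 := by omega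
              simp only [Finset.mem_insert, Finset.mem_singleton]
              rcases this with h|h
              · exact Or.inl (c_inj (by rw [h]))
              · exact Or.inr (c_inj (by rw [h, hcj1]))
            have hXcard : Multiset.card Qin + 3 ≤ (propSupp (i + 1, j) ∪ multiSupp Qin).card := by
              by_cases hQin0 : Qin = 0
              · have h0' : Multiset.card Qin = 0 := by rw [hQin0]; rfl
                have hle' : (propSupp ((i + 1 : ZMod n), j)).card ≤
                    (propSupp (i + 1, j) ∪ multiSupp Qin).card :=
                  Finset.card_le_card Finset.subset_union_left
                omega
              · have hdenIn := hDen Qin (le_trans (Multiset.filter_le _ _) hQPs) hQin0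
                have : (multiSupp Qin).card ≤ (propSupp (i + 1, j) ∪ multiSupp Qin).card :=
                  Finset.card_le_card Finset.subset_union_right
                omega
            have hUn := card_union_ge (propSupp (i + 1, j) ∪ multiSupp Qin) (multiSupp Qout)
              j (j + 1) hinter
            rw [hXP]
            omega
    · -- the new propagator is not in P
      have hPE : P ≤ Ps.erase (i, j) := by
        rw [Multiset.le_iff_count] at hP ⊢
        intro x
        have h := hP x
        by_cases hx : x = (i + 1, j)
        · subst hx
          rw [Multiset.count_eq_zero_of_notMem hmem]
          omega
        · rwa [Multiset.count_cons_of_ne hx] at h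
      exact hDen P (le_trans hPE (Multiset.erase_le _ _)) hPne
  · -- global density
    rw [Multiset.card_cons, Multiset.card_erase_of_mem hp, Nat.pred_eq_sub_one]
    omega
end
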